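/- arXiv:1811.01094 — 2 statements merged into one kernel-verified Lean document; each statement's English description precedes it below -/
import Mathlib

section
/- Let C and T be R-categories, let α = (I^g, α^g)_{g∈mor(𝒢)} and β = (J^g, β^g)_{g∈mor(𝒢)} be partial actions of a groupoid 𝒢 on C and T respectively, and suppose (T, β) is a globalization of (C, α) with structural faithful semifunctors φ_e : I^e → J^e. Then the induced global action β_{a(T)} = (a(T)_g, β_g) of 𝒢 on the ring a(T) is a globalization (in the ring sense) of the induced partial action α_{a(C)} = (a(C)_g, α_g) of 𝒢 on a(C), with the ring monomorphisms ψ_e : a(C)_e → a(T)_e induced by φ_e. -/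
open scoped Classical

noncomputable section

universe u u₂ v v' w w'

/-- A one-sorted (algebraic) groupoid: a set `G` of morphisms with a
partially defined multiplication (`comp g h` meaning `d g = r h`), a total
extension `mul` of it, and inversion. -/
structure AlgGroupoid (G : Type u₂) where
  mul : G → G → G
  inv : G → G
  comp : G → G → Prop
  comp_iff : ∀ g h, comp g h ↔ mul (inv g) g = mul h (inv h)
  mul_assoc' : ∀ g h k, comp g h → comp h k → mul (mul g h) k = mul g (mul h k)
  comp_mul_left : ∀ g h k, comp g h → comp h k → comp (mul g h) k
  comp_mul_right : ∀ g h k, comp g h → comp h k → comp g (mul h k)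
  inv_inv' : ∀ g, inv (inv g) = g
  comp_inv_left : ∀ g, comp (inv g) g
  comp_inv_right : ∀ g, comp g (inv g)
  inv_mul_cancel' : ∀ g h, comp g h → mul (inv g) (mul g h) = h
  mul_inv_cancel' : ∀ g h, comp g h → mul (mul g h) (inv h) = g
  inv_mul' : ∀ g h, comp g h → inv (mul g h) = mul (inv h) (inv g)

namespace AlgGroupoid

variable {G : Type u₂}

/-- The domain identity `d g = g⁻¹ g`. -/
def d (𝒢 : AlgGroupoid G) (g : G) : G := 𝒢.mul (𝒢.inv g) g

/-- The range identity `r g = g g⁻¹`. -/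
def r (𝒢 : AlgGroupoid G) (g : G) : G := 𝒢.mul g (𝒢.inv g)

/-- The set of identities `𝒢₀` of the groupoid. -/
def units (𝒢 : AlgGroupoid G) : Set G := {e | ∃ g, e = 𝒢.d g}

/-- A partial action of a groupoid `𝒢` on the subset `X` of the type `Y`:
the data is a family of domains `D g ⊆ X` and a (total extension of a)
family of maps `act g : D g⁻¹ → D g`. -/
def IsPartialActionOn {Y : Type v} (𝒢 : AlgGroupoid G)
    (X : Set Y) (D : G → Set Y) (act : G → Y → Y) : Prop :=
  (∀ g, D g ⊆ X) ∧
  (∀ g, D g ⊆ D (𝒢.r g)) ∧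
  (∀ x ∈ X, ∃ e ∈ 𝒢.units, x ∈ D e) ∧
  (∀ e ∈ 𝒢.units, ∀ x ∈ D e, act e x = x) ∧
  (∀ g, ∀ x ∈ D (𝒢.inv g), act g x ∈ D g) ∧
  (∀ g, ∀ x ∈ D (𝒢.inv g), act (𝒢.inv g) (act g x) = x) ∧
  (∀ g h, 𝒢.comp g h → act g '' (D (𝒢.inv g) ∩ D h) = D g ∩ D (𝒢.mul g h)) ∧
  (∀ g h, 𝒢.comp g h → ∀ x ∈ D (𝒢.inv h),
      act h x ∈ D (𝒢.inv g) ∩ D h → act g (act h x) = act (𝒢.mul g h) x)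

/-- A partial action of a groupoid on (all of) a set `Y`. -/
def IsSetPartialAction {Y : Type v} (𝒢 : AlgGroupoid G)
    (D : G → Set Y) (act : G → Y → Y) : Prop :=
  𝒢.IsPartialActionOn Set.univ D act

/-- A partial set action is global when `α_g ∘ α_h = α_{gh}` (as partially
defined maps) for every composable pair `(g, h)`. -/
def SetActionIsGlobal {Y : Type v} (𝒢 : AlgGroupoid G)
    (D : G → Set Y) (act : G → Y → Y) : Prop :=
  ∀ g h, 𝒢.comp g h →
    D (𝒢.inv (𝒢.mul g h)) = {x ∈ D (𝒢.inv h) | act h x ∈ D (𝒢.inv g)} ∧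
    ∀ x ∈ D (𝒢.inv (𝒢.mul g h)), act g (act h x) = act (𝒢.mul g h) x

end AlgGroupoid
/-- An `R`-semicategory with object type `Ob`: morphism `R`-modules
`Hom y x` (the morphisms *from `x` to `y`*, i.e. `_yC_x`) and an
associative `R`-bilinear composition (no identities required). -/
structure RSemicat (R : Type u) [CommRing R] (Ob : Type v) : Type (max u v (w + 1)) where
  Hom : Ob → Ob → Type w
  [homAdd : ∀ y x, AddCommGroup (Hom y x)]
  [homMod : ∀ y x, Module R (Hom y x)]
  comp : ∀ {z y x : Ob}, Hom z y → Hom y x → Hom z x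
  comp_assoc : ∀ {v z y x : Ob} (f : Hom v z) (g : Hom z y) (h : Hom y x),
      comp (comp f g) h = comp f (comp g h)
  comp_add_left : ∀ {z y x : Ob} (f f' : Hom z y) (g : Hom y x),
      comp (f + f') g = comp f g + comp f' g
  comp_add_right : ∀ {z y x : Ob} (f : Hom z y) (g g' : Hom y x),
      comp f (g + g') = comp f g + comp f g'
  comp_smul_left : ∀ {z y x : Ob} (c : R) (f : Hom z y) (g : Hom y x),
      comp (c • f) g = c • comp f g
  comp_smul_right : ∀ {z y x : Ob} (c : R) (f : Hom z y) (g : Hom y x),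
      comp f (c • g) = c • comp f g

attribute [instance] RSemicat.homAdd RSemicat.homMod

namespace RSemicat

variable {R : Type u} [CommRing R] {Ob : Type v}

theorem comp_zero_left (C : RSemicat.{u, v, w} R Ob) {z y x : Ob} (g : C.Hom y x) :
    C.comp (0 : C.Hom z y) g = 0 := by
  have h := C.comp_add_left (0 : C.Hom z y) 0 g
  rw [add_zero] at h
  exact left_eq_add.mp h

theorem comp_zero_right (C : RSemicat.{u, v, w} R Ob) {z y x : Ob} (f : C.Hom z y) :
    C.comp f (0 : C.Hom y x) = 0 := by
  have h := C.comp_add_right f (0 : C.Hom y x) 0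
  rw [add_zero] at h
  exact left_eq_add.mp h

/-- An ideal of an `R`-semicategory: a family of submodules closed under
composition with arbitrary morphisms on either side. -/
def IsIdeal (C : RSemicat R Ob) (I : ∀ y x : Ob, Submodule R (C.Hom y x)) : Prop :=
  (∀ (z y x : Ob) (u : C.Hom z y) (f : C.Hom y x), f ∈ I y x → C.comp u f ∈ I z x) ∧
  (∀ (z y x : Ob) (f : C.Hom z y) (u : C.Hom y x), f ∈ I z y → C.comp f u ∈ I z x)

/-- `J` is an ideal of the ideal `I`: `J ⊆ I` and `J` is closed under
composition with morphisms of `I` on either side. -/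
def IsIdealIn (C : RSemicat R Ob) (J I : ∀ y x : Ob, Submodule R (C.Hom y x)) : Prop :=
  (∀ y x, J y x ≤ I y x) ∧
  (∀ (z y x : Ob) (u : C.Hom z y) (f : C.Hom y x), u ∈ I z y → f ∈ J y x → C.comp u f ∈ J z x) ∧
  (∀ (z y x : Ob) (f : C.Hom z y) (u : C.Hom y x), f ∈ J z y → u ∈ I y x → C.comp f u ∈ J z x)

/-- `u ∈ _xI_x` is a local identity of the ideal `I` at the object `x`. -/
def IsLocalIdentity (C : RSemicat R Ob) (I : ∀ y x : Ob, Submodule R (C.Hom y x))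
    (x : Ob) (u : C.Hom x x) : Prop :=
  (∀ (y : Ob) (f : C.Hom x y), f ∈ I x y → C.comp u f = f) ∧
  (∀ (y : Ob) (f : C.Hom y x), f ∈ I y x → C.comp f u = f)

/-- `u ∈ _xI_x` is a left local identity of the ideal `I` at the object `x`. -/
def IsLeftLocalIdentity (C : RSemicat R Ob) (I : ∀ y x : Ob, Submodule R (C.Hom y x))
    (x : Ob) (u : C.Hom x x) : Prop :=
  ∀ (y : Ob) (f : C.Hom x y), f ∈ I x y → C.comp u f = f

/-- An `R`-semicategory is an `R`-category when every object has an
identity morphism. -/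
def HasIdentities (C : RSemicat R Ob) : Prop :=
  ∀ x : Ob, ∃ u : C.Hom x x,
    (∀ (y : Ob) (f : C.Hom x y), C.comp u f = f) ∧
    (∀ (y : Ob) (f : C.Hom y x), C.comp f u = f)

end RSemicat

/-- The raw data of a partial action of a groupoid (with morphism type `G`)
on an `R`-semicategory `C`: domains `D₀ g` and (total extensions of) maps
`act₀ g` on objects, a family of submodules `I g` (the ideals `I^g`) and
(total extensions of) maps `act g : I^{g⁻¹} → I^g` on morphisms. -/
structure SemicatActionData (R : Type u) [CommRing R] (G : Type u₂) {Ob : Type v}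
    (C : RSemicat.{u, v, w} R Ob) where
  D₀ : G → Set Ob
  act₀ : G → Ob → Ob
  I : G → ∀ y x : Ob, Submodule R (C.Hom y x)
  act : ∀ (g : G) {y x : Ob}, C.Hom y x → C.Hom (act₀ g y) (act₀ g x)

variable {R : Type u} [CommRing R] {G : Type u₂} {Ob : Type v}

/-- Definition of a partial action of a groupoid `𝒢` on an `R`-semicategory `C`. -/
def IsSemicatPartialAction (𝒢 : AlgGroupoid G) (C : RSemicat.{u, v, w} R Ob)
    (a : SemicatActionData R G C) : Prop :=
  -- (i) a partial action on the set of objects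
  𝒢.IsSetPartialAction a.D₀ a.act₀ ∧
  -- (ii) `_yI^g_x = 0` unless `{y, x} ⊆ C₀^g`
  (∀ (g : G) (y x : Ob), ¬(y ∈ a.D₀ g ∧ x ∈ a.D₀ g) → a.I g y x = ⊥) ∧
  -- `I^g ⊴ I^{r g} ⊴ C`
  (∀ g : G, C.IsIdealIn (a.I g) (a.I (𝒢.r g))) ∧
  (∀ g : G, C.IsIdeal (a.I (𝒢.r g))) ∧
  -- (iii) `α^g : I^{g⁻¹} → I^g` is an isomorphism of `R`-semicategories
  (∀ (g : G) (y x : Ob) (f : C.Hom y x), f ∈ a.I (𝒢.inv g) y x →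
      a.act g f ∈ a.I g (a.act₀ g y) (a.act₀ g x)) ∧
  (∀ (g : G) (y x : Ob) (f f' : C.Hom y x), f ∈ a.I (𝒢.inv g) y x →
      f' ∈ a.I (𝒢.inv g) y x → a.act g (f + f') = a.act g f + a.act g f') ∧
  (∀ (g : G) (y x : Ob) (c : R) (f : C.Hom y x), f ∈ a.I (𝒢.inv g) y x →
      a.act g (c • f) = c • a.act g f) ∧
  (∀ (g : G) (y x : Ob) (f f' : C.Hom y x), f ∈ a.I (𝒢.inv g) y x →
      f' ∈ a.I (𝒢.inv g) y x → a.act g f = a.act g f' → f = f') ∧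
  (∀ g : G, ∀ y ∈ a.D₀ (𝒢.inv g), ∀ x ∈ a.D₀ (𝒢.inv g),
      ∀ k ∈ a.I g (a.act₀ g y) (a.act₀ g x), ∃ f ∈ a.I (𝒢.inv g) y x, a.act g f = k) ∧
  (∀ (g : G) (z y x : Ob) (f : C.Hom z y) (f' : C.Hom y x), f ∈ a.I (𝒢.inv g) z y →
      f' ∈ a.I (𝒢.inv g) y x → a.act g (C.comp f f') = C.comp (a.act g f) (a.act g f')) ∧
  -- (iv) `α^e = id` on `I^e` for identities `e`
  (∀ e ∈ 𝒢.units, ∀ (y x : Ob) (f : C.Hom y x), f ∈ a.I e y x → HEq (a.act e f) f) ∧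
  -- (v)
  (∀ g h : G, 𝒢.comp g h → ∀ (y x : Ob) (f : C.Hom y x),
      f ∈ a.I h y x → f ∈ a.I (𝒢.inv g) y x →
      a.act (𝒢.inv h) f ∈
        a.I (𝒢.inv (𝒢.mul g h)) (a.act₀ (𝒢.inv h) y) (a.act₀ (𝒢.inv h) x)) ∧
  -- (vi) `α^g ∘ α^h = α^{gh}` on `α^{h⁻¹}(I^h ∩ I^{g⁻¹})`
  (∀ g h : G, 𝒢.comp g h → ∀ (y x : Ob) (f : C.Hom y x), f ∈ a.I (𝒢.inv h) y x →
      a.act h f ∈ a.I (𝒢.inv g) (a.act₀ h y) (a.act₀ h x) →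
      HEq (a.act g (a.act h f)) (a.act (𝒢.mul g h) f))

/-- A partial action of a groupoid on an `R`-semicategory is global when
`α^g ∘ α^h = α^{gh}` and `α₀^g ∘ α₀^h = α₀^{gh}` for every composable pair. -/
def SemicatActionIsGlobal (𝒢 : AlgGroupoid G) (C : RSemicat.{u, v, w} R Ob)
    (a : SemicatActionData R G C) : Prop :=
  𝒢.SetActionIsGlobal a.D₀ a.act₀ ∧
  ∀ g h : G, 𝒢.comp g h → ∀ (y x : Ob) (f : C.Hom y x),
    (f ∈ a.I (𝒢.inv (𝒢.mul g h)) y x ↔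
      f ∈ a.I (𝒢.inv h) y x ∧ a.act h f ∈ a.I (𝒢.inv g) (a.act₀ h y) (a.act₀ h x)) ∧
    (f ∈ a.I (𝒢.inv (𝒢.mul g h)) y x → HEq (a.act g (a.act h f)) (a.act (𝒢.mul g h) f))
section Skew

variable (𝒢 : AlgGroupoid G)

/-- The product of homogeneous components in the (possibly non-associative)
partial skew groupoid semicategory `C ∗_α 𝒢`:
for `f ∈ _zI^t_{ty}` and `l ∈ _yI^g_{gx}` the product is
`α^t(α^{t⁻¹}(f) ∘ l) ∈ _zI^{tg}_{(tg)x}` when `(t, g)` is composable and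
`x ∈ C₀^{(tg)⁻¹}`, and `0` otherwise. -/
def skewMul (C : RSemicat.{u, v, w} R Ob) (a : SemicatActionData R G C) (t g : G)
    {z y x : Ob} (f : C.Hom z (a.act₀ t y)) (l : C.Hom y (a.act₀ g x)) :
    C.Hom z (a.act₀ (𝒢.mul t g) x) :=
  if h : 𝒢.comp t g ∧ x ∈ a.D₀ (𝒢.inv (𝒢.mul t g)) ∧
      a.act₀ (𝒢.inv t) (a.act₀ t y) = y ∧ a.act₀ t (a.act₀ (𝒢.inv t) z) = z ∧
      a.act₀ t (a.act₀ g x) = a.act₀ (𝒢.mul t g) x then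
    cast (by rw [h.2.2.2.1, h.2.2.2.2])
      (a.act t (C.comp (cast (by rw [h.2.2.1]) (a.act (𝒢.inv t) f)) l))
  else 0

/-- Associativity of the partial skew groupoid semicategory `C ∗_α 𝒢`:
`(f l) k = f (l k)` on homogeneous components. -/
def SkewAssoc (C : RSemicat.{u, v, w} R Ob) (a : SemicatActionData R G C) : Prop :=
  ∀ (t g h : G) (z y x u : Ob),
    y ∈ a.D₀ (𝒢.inv t) → x ∈ a.D₀ (𝒢.inv g) → u ∈ a.D₀ (𝒢.inv h) →
    ∀ (f : C.Hom z (a.act₀ t y)) (l : C.Hom y (a.act₀ g x)) (k : C.Hom x (a.act₀ h u)),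
      f ∈ a.I t z (a.act₀ t y) → l ∈ a.I g y (a.act₀ g x) → k ∈ a.I h x (a.act₀ h u) →
      HEq (skewMul 𝒢 C a (𝒢.mul t g) h (skewMul 𝒢 C a t g f l) k)
          (skewMul 𝒢 C a t (𝒢.mul g h) f (skewMul 𝒢 C a g h l k))

end Skew

section Algebra

/-- The underlying module of the `R`-algebra `a(C) = ⊕_{x,y ∈ C₀} _yC_x`. -/
abbrev aHom (C : RSemicat.{u, v, w} R Ob) : Type (max v w) :=
  Π₀ p : Ob × Ob, C.Hom p.1 p.2

/-- The multiplication of the `R`-algebra `a(C)`: the matrix product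
induced by the composition of `C`. -/
def aMul (C : RSemicat.{u, v, w} R Ob) (F K : aHom C) : aHom C :=
  DFinsupp.sum F fun p v => DFinsupp.sum K fun q w =>
    if h : p.2 = q.1 then
      DFinsupp.single (⟨p.1, q.2⟩ : Ob × Ob) (C.comp v (cast (by rw [h]) w : C.Hom p.2 q.2))
    else 0

/-- `a(C)_g = ⊕_{x,y} _yI^g_x` as a subset of `a(C)`. -/
def aIdealSet (C : RSemicat.{u, v, w} R Ob) (a : SemicatActionData R G C) (g : G) :
    Set (aHom C) :=
  {F | ∀ p : Ob × Ob, F p ∈ a.I g p.1 p.2}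

/-- The map `a(C)_{g⁻¹} → a(C)_g` induced componentwise by `α^g`. -/
def aAct {C : RSemicat.{u, v, w} R Ob} (a : SemicatActionData R G C) (g : G)
    (F : aHom C) : aHom C :=
  DFinsupp.sum F fun p v =>
    DFinsupp.single (⟨a.act₀ g p.1, a.act₀ g p.2⟩ : Ob × Ob) (a.act g v)

/-- A multiplier `(Rm, Lm)` of the (possibly non-unital) "ring" given by a
multiplication `mul` on the subset `A` of an additive group `M`. -/
def IsMultiplierOn {M : Type*} [AddCommGroup M] (mul : M → M → M) (A : Set M)
    (Rm Lm : M → M) : Prop :=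
  (∀ a ∈ A, Rm a ∈ A) ∧ (∀ a ∈ A, Lm a ∈ A) ∧
  (∀ a ∈ A, ∀ b ∈ A, Rm (a + b) = Rm a + Rm b) ∧
  (∀ a ∈ A, ∀ b ∈ A, Lm (a + b) = Lm a + Lm b) ∧
  (∀ a ∈ A, ∀ b ∈ A, Rm (mul a b) = mul a (Rm b)) ∧
  (∀ a ∈ A, ∀ b ∈ A, Lm (mul a b) = mul (Lm a) b) ∧
  (∀ a ∈ A, ∀ b ∈ A, mul (Rm a) b = mul a (Lm b))

/-- `(L, R)`-associativity: for any two multipliers `(Rm, Lm)` and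
`(Rm', Lm')` one has `Rm ∘ Lm' = Lm' ∘ Rm`. -/
def IsLRAssocOn {M : Type*} [AddCommGroup M] (mul : M → M → M) (A : Set M) : Prop :=
  ∀ Rm Lm Rm' Lm', IsMultiplierOn mul A Rm Lm → IsMultiplierOn mul A Rm' Lm' →
    ∀ a ∈ A, Rm (Lm' a) = Lm' (Rm a)

/-- `J` is a two-sided ideal of the "ring" `I ⊆ M` (with multiplication `mul`). -/
def IsRingIdealPair {M : Type*} [AddCommGroup M] (mul : M → M → M) (J I : Set M) : Prop :=
  J ⊆ I ∧ (0 : M) ∈ J ∧ (∀ a ∈ J, ∀ b ∈ J, a + b ∈ J) ∧ (∀ a ∈ J, -a ∈ J) ∧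
  (∀ a ∈ I, ∀ b ∈ J, mul a b ∈ J ∧ mul b a ∈ J)

/-- A partial action of a groupoid `𝒢` on the (possibly non-unital) ring
`(M, mul)`: ideals `D (r g) ⊴ M`, `D g ⊴ D (r g)` and ring isomorphisms
`act g : D g⁻¹ → D g` satisfying the partial action axioms. -/
def IsRingPartialAction {M : Type*} [AddCommGroup M] (𝒢 : AlgGroupoid G)
    (mul : M → M → M) (D : G → Set M) (act : G → M → M) : Prop :=
  (∀ g, IsRingIdealPair mul (D (𝒢.r g)) Set.univ) ∧
  (∀ g, IsRingIdealPair mul (D g) (D (𝒢.r g))) ∧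
  (∀ g, ∀ x ∈ D (𝒢.inv g), act g x ∈ D g) ∧
  (∀ g, ∀ x ∈ D (𝒢.inv g), act (𝒢.inv g) (act g x) = x) ∧
  (∀ g, ∀ y ∈ D g, ∃ x ∈ D (𝒢.inv g), act g x = y) ∧
  (∀ g, ∀ x ∈ D (𝒢.inv g), ∀ y ∈ D (𝒢.inv g), act g (x + y) = act g x + act g y) ∧
  (∀ g, ∀ x ∈ D (𝒢.inv g), ∀ y ∈ D (𝒢.inv g), act g (mul x y) = mul (act g x) (act g y)) ∧
  (∀ e ∈ 𝒢.units, ∀ x ∈ D e, act e x = x) ∧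
  (∀ g h, 𝒢.comp g h → ∀ x, x ∈ D (𝒢.inv g) → x ∈ D h →
      act (𝒢.inv h) x ∈ D (𝒢.inv (𝒢.mul g h))) ∧
  (∀ g h, 𝒢.comp g h → ∀ x ∈ D (𝒢.inv h), act h x ∈ D (𝒢.inv g) →
      act g (act h x) = act (𝒢.mul g h) x)

/-- A partial ring action is global when `α_g ∘ α_h = α_{gh}` for every
composable pair. -/
def RingActionIsGlobal {M : Type*} (𝒢 : AlgGroupoid G)
    (D : G → Set M) (act : G → M → M) : Prop :=
  ∀ g h, 𝒢.comp g h →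
    (∀ x, x ∈ D (𝒢.inv (𝒢.mul g h)) ↔ x ∈ D (𝒢.inv h) ∧ act h x ∈ D (𝒢.inv g)) ∧
    (∀ x ∈ D (𝒢.inv (𝒢.mul g h)), act g (act h x) = act (𝒢.mul g h) x)

end Algebra
section Globalization

variable {Ob' : Type v'}

/-- Membership in the image ideal `φ(I)` (inside the semicategory `D`),
with the convention that its components vanish away from the image of `ι`. -/
def ImageMem (C : RSemicat.{u, v, w} R Ob) (D : RSemicat.{u, v', w'} R Ob') (ι : Ob → Ob')
    (I : ∀ y x : Ob, Submodule R (C.Hom y x))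
    (φ : ∀ {y x : Ob}, C.Hom y x → D.Hom (ι y) (ι x))
    {z x' : Ob'} (k : D.Hom z x') : Prop :=
  k = 0 ∨ ∃ (y x : Ob) (f : C.Hom y x), f ∈ I y x ∧ ι y = z ∧ ι x = x' ∧ HEq (φ f) k

/-- The data of a (candidate) globalization of a partial action on `C`:
a global action on the semicategory `D`, an inclusion `ι : C₀ → D₀` of object
sets, and semifunctors `φ_e : I^e → J^e` acting as `ι` on objects. -/
structure GlobalizationData (R : Type u) [CommRing R] (G : Type u₂) {Ob : Type v}
    {Ob' : Type v'} (C : RSemicat.{u, v, w} R Ob) (D : RSemicat.{u, v', w'} R Ob') where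
  b : SemicatActionData R G D
  ι : Ob → Ob'
  φ : ∀ (e : G) {y x : Ob}, C.Hom y x → D.Hom (ι y) (ι x)

/-- `(D, β, (φ_e))` is a globalization of the partial groupoid action
`(C, α)` (Definition 3.2 of the paper). -/
def IsGlobalization (𝒢 : AlgGroupoid G) (C : RSemicat.{u, v, w} R Ob)
    (a : SemicatActionData R G C) (D : RSemicat.{u, v', w'} R Ob')
    (gd : GlobalizationData R G C D) : Prop :=
  Function.Injective gd.ι ∧
  -- β is a global action of 𝒢 on D
  IsSemicatPartialAction 𝒢 D gd.b ∧
  SemicatActionIsGlobal 𝒢 D gd.b ∧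
  -- (i) the object-level action β₀ is a globalization of α₀
  (∀ e ∈ 𝒢.units, ∀ x : Ob, x ∈ a.D₀ e ↔ gd.ι x ∈ gd.b.D₀ e) ∧
  (∀ g : G, ∀ x : Ob, x ∈ a.D₀ g ↔
      (gd.ι x ∈ gd.b.D₀ (𝒢.r g) ∧
        ∃ x' : Ob, gd.ι x' ∈ gd.b.D₀ (𝒢.d g) ∧ gd.b.act₀ g (gd.ι x') = gd.ι x)) ∧
  (∀ g : G, ∀ x ∈ a.D₀ (𝒢.inv g), gd.ι (a.act₀ g x) = gd.b.act₀ g (gd.ι x)) ∧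
  -- (ii) each φ_e is a faithful semifunctor with φ_e(I^e) ⊴ J^e
  (∀ e ∈ 𝒢.units,
    (∀ (y x : Ob) (f f' : C.Hom y x), f ∈ a.I e y x → f' ∈ a.I e y x →
        gd.φ e (f + f') = gd.φ e f + gd.φ e f') ∧
    (∀ (y x : Ob) (c : R) (f : C.Hom y x), f ∈ a.I e y x →
        gd.φ e (c • f) = c • gd.φ e f) ∧
    (∀ (z y x : Ob) (f : C.Hom z y) (f' : C.Hom y x), f ∈ a.I e z y → f' ∈ a.I e y x →
        gd.φ e (C.comp f f') = D.comp (gd.φ e f) (gd.φ e f')) ∧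
    (∀ (y x : Ob) (f f' : C.Hom y x), f ∈ a.I e y x → f' ∈ a.I e y x →
        gd.φ e f = gd.φ e f' → f = f') ∧
    (∀ (y x : Ob) (f : C.Hom y x), f ∈ a.I e y x →
        gd.φ e f ∈ gd.b.I e (gd.ι y) (gd.ι x))) ∧
  (∀ e ∈ 𝒢.units, ∀ (w z x' : Ob') (u : D.Hom w z) (k : D.Hom z x'),
      u ∈ gd.b.I e w z → ImageMem C D gd.ι (a.I e) (gd.φ e) k →
      ImageMem C D gd.ι (a.I e) (gd.φ e) (D.comp u k)) ∧
  (∀ e ∈ 𝒢.units, ∀ (z x' w : Ob') (k : D.Hom z x') (u : D.Hom x' w),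
      ImageMem C D gd.ι (a.I e) (gd.φ e) k → u ∈ gd.b.I e x' w →
      ImageMem C D gd.ι (a.I e) (gd.φ e) (D.comp k u)) ∧
  -- (iii) φ_{r g}(_yI^g_x) = φ_{r g}(_yI^{r g}_x) ∩ β^g(φ_{d g}(_{g⁻¹y}I^{d g}_{g⁻¹x}))
  (∀ g : G, ∀ y ∈ a.D₀ g, ∀ x ∈ a.D₀ g, ∀ k : D.Hom (gd.ι y) (gd.ι x),
      (∃ f ∈ a.I g y x, gd.φ (𝒢.r g) f = k) ↔
        ((∃ f ∈ a.I (𝒢.r g) y x, gd.φ (𝒢.r g) f = k) ∧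
          ∃ f' : C.Hom (a.act₀ (𝒢.inv g) y) (a.act₀ (𝒢.inv g) x),
            f' ∈ a.I (𝒢.d g) (a.act₀ (𝒢.inv g) y) (a.act₀ (𝒢.inv g) x) ∧
            HEq (gd.b.act g (gd.φ (𝒢.d g) f')) k)) ∧
  -- (iv) β^g ∘ φ_{d g} = φ_{r g} ∘ α^g on I^{g⁻¹}
  (∀ (g : G) (y x : Ob) (f : C.Hom y x), f ∈ a.I (𝒢.inv g) y x →
      HEq (gd.b.act g (gd.φ (𝒢.d g) f)) (gd.φ (𝒢.r g) (a.act g f))) ∧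
  -- (v) _yJ^g_x = Σ_{r h = r g} β^h(φ_{d h}(_{h⁻¹y}I^{d h}_{h⁻¹x}))
  (∀ (g : G) (y x : Ob'), gd.b.I g y x = Submodule.span R
      {m : D.Hom y x | ∃ h : G, 𝒢.r h = 𝒢.r g ∧
        ∃ (y' x' : Ob) (f : C.Hom y' x'), f ∈ a.I (𝒢.d h) y' x' ∧
          gd.ι y' = gd.b.act₀ (𝒢.inv h) y ∧ gd.ι x' = gd.b.act₀ (𝒢.inv h) x ∧
          HEq (gd.b.act h (gd.φ (𝒢.d h) f)) m})

/-- The ring homomorphism `ψ_e : a(C) → a(D)` induced componentwise by a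
semifunctor `φ_e`. -/
def aPhiRing {C : RSemicat.{u, v, w} R Ob} {D : RSemicat.{u, v', w'} R Ob'}
    (ι : Ob → Ob') (φ : ∀ (e : G) {y x : Ob}, C.Hom y x → D.Hom (ι y) (ι x))
    (e : G) (F : aHom C) : aHom D :=
  DFinsupp.sum F fun p v => DFinsupp.single (⟨ι p.1, ι p.2⟩ : Ob' × Ob') (φ e v)

/-- A global action `(DN, actN)` of `𝒢` on the ring `(N, mulN)` is a
globalization of the partial ring action `(DM, actM)` of `𝒢` on `(M, mulM)`
via the ring monomorphisms `ψ_e` (Definition 3.1 of the paper). -/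
def IsRingGlobalization {M N : Type*} [AddCommGroup M] [AddCommGroup N]
    (𝒢 : AlgGroupoid G)
    (mulM : M → M → M) (DM : G → Set M) (actM : G → M → M)
    (mulN : N → N → N) (DN : G → Set N) (actN : G → N → N)
    (ψ : G → M → N) : Prop :=
  IsRingPartialAction 𝒢 mulN DN actN ∧
  RingActionIsGlobal 𝒢 DN actN ∧
  (∀ e ∈ 𝒢.units,
    (∀ x ∈ DM e, ψ e x ∈ DN e) ∧
    (∀ x ∈ DM e, ∀ y ∈ DM e, ψ e (x + y) = ψ e x + ψ e y) ∧
    (∀ x ∈ DM e, ∀ y ∈ DM e, ψ e (mulM x y) = mulN (ψ e x) (ψ e y)) ∧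
    (∀ x ∈ DM e, ∀ y ∈ DM e, ψ e x = ψ e y → x = y) ∧
    -- (i) ψ_e(A_e) is an ideal of B_e
    IsRingIdealPair mulN (ψ e '' DM e) (DN e)) ∧
  -- (ii)
  (∀ g : G, ψ (𝒢.r g) '' DM g =
      (ψ (𝒢.r g) '' DM (𝒢.r g)) ∩ (actN g '' (ψ (𝒢.d g) '' DM (𝒢.d g)))) ∧
  -- (iii)
  (∀ g : G, ∀ x ∈ DM (𝒢.inv g), actN g (ψ (𝒢.d g) x) = ψ (𝒢.r g) (actM g x)) ∧
  -- (iv)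
  (∀ g : G, ∀ k : N, k ∈ DN g ↔ k ∈ AddSubgroup.closure
      {m : N | ∃ h : G, 𝒢.r h = 𝒢.r g ∧ ∃ F ∈ DM (𝒢.d h), m = actN h (ψ (𝒢.d h) F)})

end Globalization

section Orbits

/-- The orbit relation induced by a partial action of a groupoid: `e ∼ f`
iff `f = g e` for some morphism `g` with `e` in the domain of `α_g`. -/
def orbRel {Y : Type*} (𝒢 : AlgGroupoid G) (D : G → Set Y) (act : G → Y → Y)
    (e f : Y) : Prop :=
  ∃ g : G, e ∈ D (𝒢.inv g) ∧ act g e = f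

/-- `C(ρ,τ)_g = ⊕_{x ∈ ρ, y ∈ τ} _yI^g_x`, realized inside `a(C)`. -/
def CSet (C : RSemicat.{u, v, w} R Ob) (a : SemicatActionData R G C)
    (ρ τ : Set Ob) (g : G) : Set (aHom C) :=
  {F | ∀ p : Ob × Ob, F p ∈ a.I g p.1 p.2 ∧ (F p ≠ 0 → p.1 ∈ τ ∧ p.2 ∈ ρ)}

end Orbits
section SkewCatAlgebra

/-- The morphism module `_y(C∗_α𝒢)_x = ⊕_{g} _yI^g_{gx}` of the partial skew
groupoid semicategory (realized as a direct sum over all of `G`; the genuine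
morphisms are those supported on `𝒢^x` with components in `I^g`). -/
abbrev SkewHomT (C : RSemicat.{u, v, w} R Ob) (a : SemicatActionData R G C)
    (y x : Ob) : Type (max u₂ w) :=
  Π₀ g : G, C.Hom y (a.act₀ g x)

/-- Composition in the partial skew groupoid semicategory `C∗_α𝒢`. -/
def skewHomMul (𝒢 : AlgGroupoid G) (C : RSemicat.{u, v, w} R Ob)
    (a : SemicatActionData R G C) {z y x : Ob}
    (F : SkewHomT C a z y) (K : SkewHomT C a y x) : SkewHomT C a z x :=
  DFinsupp.sum F fun t f => DFinsupp.sum K fun g l =>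
    DFinsupp.single (𝒢.mul t g) (skewMul 𝒢 C a t g f l)

/-- The underlying module of the algebra `a(C∗_α𝒢)`. -/
abbrev aSkewT (C : RSemicat.{u, v, w} R Ob) (a : SemicatActionData R G C) :
    Type (max v u₂ w) :=
  Π₀ p : Ob × Ob, SkewHomT C a p.1 p.2

/-- The multiplication of the algebra `a(C∗_α𝒢)`. -/
def aSkewMul (𝒢 : AlgGroupoid G) (C : RSemicat.{u, v, w} R Ob)
    (a : SemicatActionData R G C) (F K : aSkewT C a) : aSkewT C a :=
  DFinsupp.sum F fun p u => DFinsupp.sum K fun q v =>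
    if h : p.2 = q.1 then
      DFinsupp.single (⟨p.1, q.2⟩ : Ob × Ob)
        (skewHomMul 𝒢 C a u (cast (by rw [h]) v : SkewHomT C a p.2 q.2))
    else 0

/-- The set of genuine elements of `a(C∗_α𝒢)` inside `aSkewT`. -/
def aSkewSet (𝒢 : AlgGroupoid G) (C : RSemicat.{u, v, w} R Ob)
    (a : SemicatActionData R G C) : Set (aSkewT C a) :=
  {F | ∀ (p : Ob × Ob) (g : G), F p g ∈ a.I g p.1 (a.act₀ g p.2) ∧
    (p.2 ∉ a.D₀ (𝒢.inv g) → F p g = 0)}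

/-- The underlying module of the partial skew groupoid ring
`a(C)∗_α𝒢 = ⊕_g a(C)_g δ_g`. -/
abbrev sRingT (G : Type u₂) (C : RSemicat.{u, v, w} R Ob) : Type (max v u₂ w) :=
  Π₀ _g : G, aHom C

/-- The multiplication of the partial skew groupoid ring `a(C)∗_α𝒢`:
`(a_g δ_g)(b_h δ_h) = α_g(α_{g⁻¹}(a_g) b_h) δ_{gh}` when `(g,h)` is
composable, and `0` otherwise. -/
def sRingMul (𝒢 : AlgGroupoid G) (C : RSemicat.{u, v, w} R Ob)
    (a : SemicatActionData R G C) (F K : sRingT G C) : sRingT G C :=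
  DFinsupp.sum F fun g ag => DFinsupp.sum K fun h bh =>
    if 𝒢.comp g h then
      DFinsupp.single (𝒢.mul g h) (aAct a g (aMul C (aAct a (𝒢.inv g) ag) bh))
    else 0

/-- The set of genuine elements of `a(C)∗_α𝒢` inside `sRingT`. -/
def sRingSet (C : RSemicat.{u, v, w} R Ob) (a : SemicatActionData R G C) :
    Set (sRingT G C) :=
  {K | ∀ (g : G) (p : Ob × Ob), K g p ∈ a.I g p.1 p.2}

/-- The isomorphism `a(C∗_α𝒢) → a(C)∗_α𝒢`, `f_g ↦ f_g δ_g`. -/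
def aPhi (C : RSemicat.{u, v, w} R Ob) (a : SemicatActionData R G C)
    (F : aSkewT C a) : sRingT G C :=
  DFinsupp.sum F fun p u => DFinsupp.sum u fun g f =>
    DFinsupp.single g (DFinsupp.single (⟨p.1, a.act₀ g p.2⟩ : Ob × Ob) f)

end SkewCatAlgebra

section Graded

/-- A `𝒢`-grading of an `R`-semicategory `B`: decompositions
`_yB_x = ⊕_{g} _yB_x^g` such that `_zB_y^t ⬝ _yB_x^s ⊆ _zB_x^{ts}` when
`d t = r s` and `_zB_y^t ⬝ _yB_x^s = 0` otherwise. -/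
def IsGrading (𝒢 : AlgGroupoid G) (B : RSemicat.{u, v, w} R Ob)
    (deco : ∀ y x : Ob, G → Submodule R (B.Hom y x)) : Prop :=
  (∀ y x : Ob, DirectSum.IsInternal fun g : G => deco y x g) ∧
  (∀ (z y x : Ob) (t s : G), 𝒢.comp t s → ∀ u ∈ deco z y t, ∀ v ∈ deco y x s,
      B.comp u v ∈ deco z x (𝒢.mul t s)) ∧
  (∀ (z y x : Ob) (t s : G), ¬ 𝒢.comp t s → ∀ u ∈ deco z y t, ∀ v ∈ deco y x s,
      B.comp u v = 0)

/-- The morphism submodule `_{(y,t)}(B#𝒢)_{(x,s)}` of the smash product: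
`_yB_x^{t⁻¹ s}` when `r t = r s`, and `0` otherwise. -/
def smashMod (𝒢 : AlgGroupoid G) (B : RSemicat.{u, v, w} R Ob)
    (deco : ∀ y x : Ob, G → Submodule R (B.Hom y x))
    (yt xs : Ob × G) : Submodule R (B.Hom yt.1 xs.1) :=
  if 𝒢.r yt.2 = 𝒢.r xs.2 then deco yt.1 xs.1 (𝒢.mul (𝒢.inv yt.2) xs.2) else ⊥

/-- The smash product `R`-semicategory `B#𝒢`. -/
def Smash (𝒢 : AlgGroupoid G) (B : RSemicat.{u, v, w} R Ob)
    (deco : ∀ y x : Ob, G → Submodule R (B.Hom y x))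
    (hgr : IsGrading 𝒢 B deco) :
    RSemicat.{u, max v u₂, w} R (Ob × G) where
  Hom yt xs := ↥(smashMod 𝒢 B deco yt xs)
  comp {z y x} f g := ⟨B.comp f.1 g.1, by
    obtain ⟨fv, hf⟩ := f
    obtain ⟨gv, hg⟩ := g
    show B.comp fv gv ∈ smashMod 𝒢 B deco z x
    unfold smashMod at hf hg ⊢
    by_cases h1 : 𝒢.r z.2 = 𝒢.r y.2
    · by_cases h2 : 𝒢.r y.2 = 𝒢.r x.2
      · rw [if_pos h1] at hf
        rw [if_pos h2] at hg
        rw [if_pos (h1.trans h2)]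
        have c1 : 𝒢.comp (𝒢.inv z.2) y.2 :=
          (𝒢.comp_iff _ _).2 (by rw [𝒢.inv_inv']; exact h1)
        have c2 : 𝒢.comp (𝒢.inv y.2) x.2 :=
          (𝒢.comp_iff _ _).2 (by rw [𝒢.inv_inv']; exact h2)
        have ccy : 𝒢.comp y.2 (𝒢.inv y.2) := 𝒢.comp_inv_right y.2
        have ccyc : 𝒢.comp y.2 (𝒢.mul (𝒢.inv y.2) x.2) :=
          𝒢.comp_mul_right y.2 (𝒢.inv y.2) x.2 ccy c2
        have hcomp : 𝒢.comp (𝒢.mul (𝒢.inv z.2) y.2) (𝒢.mul (𝒢.inv y.2) x.2) :=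
          𝒢.comp_mul_left (𝒢.inv z.2) y.2 (𝒢.mul (𝒢.inv y.2) x.2) c1 ccyc
        have hmem := hgr.2.1 z.1 y.1 x.1 (𝒢.mul (𝒢.inv z.2) y.2)
          (𝒢.mul (𝒢.inv y.2) x.2) hcomp fv hf gv hg
        have h2' : 𝒢.mul y.2 (𝒢.inv y.2) = 𝒢.mul x.2 (𝒢.inv x.2) := h2
        have s5 : 𝒢.mul x.2 (𝒢.mul (𝒢.inv x.2) x.2) = x.2 := by
          have h5 := 𝒢.inv_mul_cancel' (𝒢.inv x.2) x.2 (𝒢.comp_inv_left x.2)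
          rwa [𝒢.inv_inv'] at h5
        have hidx : 𝒢.mul (𝒢.mul (𝒢.inv z.2) y.2) (𝒢.mul (𝒢.inv y.2) x.2) =
            𝒢.mul (𝒢.inv z.2) x.2 := by
          rw [𝒢.mul_assoc' (𝒢.inv z.2) y.2 (𝒢.mul (𝒢.inv y.2) x.2) c1 ccyc,
            ← 𝒢.mul_assoc' y.2 (𝒢.inv y.2) x.2 ccy c2, h2',
            𝒢.mul_assoc' x.2 (𝒢.inv x.2) x.2 (𝒢.comp_inv_right x.2) (𝒢.comp_inv_left x.2),
            s5]
        rw [hidx] at hmem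
        exact hmem
      · rw [if_neg h2] at hg
        have hg0 : gv = 0 := by simpa using hg
        rw [hg0, B.comp_zero_right]
        exact Submodule.zero_mem _
    · rw [if_neg h1] at hf
      have hf0 : fv = 0 := by simpa using hf
      rw [hf0, B.comp_zero_left]
      exact Submodule.zero_mem _⟩
  comp_assoc f g h := Subtype.ext (B.comp_assoc f.1 g.1 h.1)
  comp_add_left f f' g := Subtype.ext (B.comp_add_left f.1 f'.1 g.1)
  comp_add_right f g g' := Subtype.ext (B.comp_add_right f.1 g.1 g'.1)
  comp_smul_left c f g := Subtype.ext (B.comp_smul_left c f.1 g.1)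
  comp_smul_right c f g := Subtype.ext (B.comp_smul_right c f.1 g.1)

/-- The object part of the global action of `𝒢` on `B#𝒢`:
`α₀^g (x, s) = (x, g s)`. -/
def smashAct₀ (𝒢 : AlgGroupoid G) (g : G) (p : Ob × G) : Ob × G :=
  (p.1, 𝒢.mul g p.2)

/-- The global action of `𝒢` on the smash product `B#𝒢` (domains
`B₀ × 𝒢(-, r g)`, `α₀^g(x,s) = (x, gs)`, ideals `_{(y,t)}I^g_{(x,s)}`
given by `_yB_x^{t⁻¹s}` when `r t = r s = r g` and `0` otherwise, and `α^g`
given by the identity on the underlying morphisms of `B`). -/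
def smashActionData (𝒢 : AlgGroupoid G) (B : RSemicat.{u, v, w} R Ob)
    (deco : ∀ y x : Ob, G → Submodule R (B.Hom y x))
    (hgr : IsGrading 𝒢 B deco) :
    SemicatActionData R G (Smash 𝒢 B deco hgr) where
  D₀ g := {p : Ob × G | 𝒢.r p.2 = 𝒢.r g}
  act₀ := smashAct₀ 𝒢
  I g yt xs := if 𝒢.r yt.2 = 𝒢.r g ∧ 𝒢.r xs.2 = 𝒢.r g then ⊤ else ⊥
  act g {yt xs} f :=
    if h : (f.1 : B.Hom yt.1 xs.1) ∈
        smashMod 𝒢 B deco (smashAct₀ 𝒢 g yt) (smashAct₀ 𝒢 g xs) then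
      ⟨f.1, h⟩
    else 0

end Graded


section Stmt15Aux

namespace AlgGroupoid

variable {G : Type u₂} (𝒢 : AlgGroupoid G)

lemma d_inv (g : G) : 𝒢.d (𝒢.inv g) = 𝒢.r g := by
  unfold d r; rw [𝒢.inv_inv']

lemma r_inv (g : G) : 𝒢.r (𝒢.inv g) = 𝒢.d g := by
  unfold d r; rw [𝒢.inv_inv']

lemma d_mem_units (g : G) : 𝒢.d g ∈ 𝒢.units := ⟨g, rfl⟩

lemma r_mem_units (g : G) : 𝒢.r g ∈ 𝒢.units := ⟨𝒢.inv g, (𝒢.d_inv g).symm⟩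

lemma inv_unit {e : G} (he : e ∈ 𝒢.units) : 𝒢.inv e = e := by
  obtain ⟨g, rfl⟩ := he
  unfold d
  rw [𝒢.inv_mul' _ _ (𝒢.comp_inv_left g), 𝒢.inv_inv']

lemma mul_g_d (g : G) : 𝒢.mul g (𝒢.d g) = g := by
  have h := 𝒢.inv_mul_cancel' (𝒢.inv g) g (𝒢.comp_inv_left g)
  rwa [𝒢.inv_inv'] at h

lemma mul_r_g (g : G) : 𝒢.mul (𝒢.r g) g = g := by
  have h := 𝒢.mul_inv_cancel' g (𝒢.inv g) (𝒢.comp_inv_right g)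
  rwa [𝒢.inv_inv'] at h

lemma mul_unit_self {e : G} (he : e ∈ 𝒢.units) : 𝒢.mul e e = e := by
  obtain ⟨g, rfl⟩ := he
  have c1 : 𝒢.comp (𝒢.inv g) g := 𝒢.comp_inv_left g
  have c2 : 𝒢.comp g (𝒢.mul (𝒢.inv g) g) :=
    𝒢.comp_mul_right g (𝒢.inv g) g (𝒢.comp_inv_right g) c1
  have h := 𝒢.mul_assoc' (𝒢.inv g) g (𝒢.mul (𝒢.inv g) g) c1 c2
  unfold d
  rw [h]
  rw [show 𝒢.mul g (𝒢.mul (𝒢.inv g) g) = g from 𝒢.mul_g_d g]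

lemma r_unit {e : G} (he : e ∈ 𝒢.units) : 𝒢.r e = e := by
  unfold r; rw [𝒢.inv_unit he, 𝒢.mul_unit_self he]

lemma d_unit {e : G} (he : e ∈ 𝒢.units) : 𝒢.d e = e := by
  unfold d; rw [𝒢.inv_unit he, 𝒢.mul_unit_self he]

lemma mul_inv_self (g : G) : 𝒢.mul g (𝒢.inv g) = 𝒢.r g := rfl

lemma mul_inv_self' (g : G) : 𝒢.mul (𝒢.inv g) g = 𝒢.d g := rfl

end AlgGroupoid

namespace Stmt15Aux

open scoped Classical

variable {R : Type u} [CommRing R] {G : Type u₂} {Ob : Type v} {Ob' : Type v'}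

section Pointwise

variable (C : RSemicat.{u, v, w} R Ob)

lemma single_apply_mem (I : ∀ y x : Ob, Submodule R (C.Hom y x))
    {i : Ob × Ob} {v : C.Hom i.1 i.2} (hv : v ∈ I i.1 i.2) (j : Ob × Ob) :
    (DFinsupp.single i v : aHom C) j ∈ I j.1 j.2 := by
  by_cases h : i = j
  · subst h; rwa [DFinsupp.single_eq_same]
  · rw [DFinsupp.single_eq_of_ne (Ne.symm h)]; exact zero_mem _

lemma single_heq {i j : Ob × Ob} (hij : i = j) {v : C.Hom i.1 i.2} {w : C.Hom j.1 j.2}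
    (hvw : HEq v w) : (DFinsupp.single i v : aHom C) = DFinsupp.single j w := by
  subst hij; rw [eq_of_heq hvw]

lemma smul_heq {y1 x1 y2 x2 : Ob} (e1 : y1 = y2) (e2 : x1 = x2) (c : R)
    {v : C.Hom y1 x1} {w : C.Hom y2 x2} (h : HEq v w) : HEq (c • v) (c • w) := by
  subst e1; subst e2; rw [eq_of_heq h]

lemma apply_heq (F : aHom C) {i j : Ob × Ob} (h : i = j) : HEq (F i) (F j) := by
  subst h; rfl

/-- The submodule of `a(C)` of elements with all components in `S`. -/
def pointwise (S : ∀ y x : Ob, Submodule R (C.Hom y x)) : Submodule R (aHom C) where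
  carrier := {F | ∀ p : Ob × Ob, F p ∈ S p.1 p.2}
  add_mem' := fun hF hK p => by rw [DFinsupp.add_apply]; exact add_mem (hF p) (hK p)
  zero_mem' := fun p => by rw [DFinsupp.zero_apply]; exact zero_mem _
  smul_mem' := fun c F hF p => by rw [DFinsupp.smul_apply]; exact Submodule.smul_mem _ c (hF p)

lemma aIdealSet_eq_pointwise (a : SemicatActionData R G C) (g : G) :
    aIdealSet C a g = ↑(pointwise C (a.I g)) := rfl

end Pointwise

section Pushf

variable {C : RSemicat.{u, v, w} R Ob} {D : RSemicat.{u, v', w'} R Ob'}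
variable (τ : Ob × Ob → Ob' × Ob')
variable (Φ : ∀ p : Ob × Ob, C.Hom p.1 p.2 → D.Hom (τ p).1 (τ p).2)

/-- Generic componentwise pushforward `⊕ single (τ p) (Φ p (F p))`. -/
def pushf (F : aHom C) : aHom D :=
  F.sum fun p v => DFinsupp.single (τ p) (Φ p v)

variable {τ Φ}

lemma pushf_eq_sum (hΦ0 : ∀ p, Φ p 0 = 0) {F : aHom C} {s : Finset (Ob × Ob)}
    (hs : F.support ⊆ s) :
    pushf τ Φ F = ∑ p ∈ s, DFinsupp.single (τ p) (Φ p (F p)) := by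
  rw [pushf]
  exact Finset.sum_subset hs fun p _ hp => by
    rw [DFinsupp.notMem_support_iff.mp hp]
    show (DFinsupp.single (τ p) (Φ p 0) : aHom D) = 0
    rw [hΦ0, DFinsupp.single_zero]

lemma pushf_zero : pushf τ Φ (0 : aHom C) = 0 := DFinsupp.sum_zero_index

lemma pushf_single (hΦ0 : ∀ p, Φ p 0 = 0) (p : Ob × Ob) (v : C.Hom p.1 p.2) :
    pushf τ Φ (DFinsupp.single p v) = DFinsupp.single (τ p) (Φ p v) :=
  DFinsupp.sum_single_index (by rw [hΦ0, DFinsupp.single_zero])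

lemma pushf_apply_mem (J : ∀ y x : Ob', Submodule R (D.Hom y x)) {F : aHom C}
    (h : ∀ p ∈ F.support, Φ p (F p) ∈ J (τ p).1 (τ p).2) (q : Ob' × Ob') :
    pushf τ Φ F q ∈ J q.1 q.2 := by
  rw [pushf, DFinsupp.sum, DFinsupp.finset_sum_apply]
  exact Submodule.sum_mem _ fun p hp => single_apply_mem D J (h p hp) q

lemma pushf_add {S : ∀ y x : Ob, Submodule R (C.Hom y x)}
    (hΦ0 : ∀ p, Φ p 0 = 0)
    (hΦadd : ∀ (p : Ob × Ob) (v w : C.Hom p.1 p.2), v ∈ S p.1 p.2 → w ∈ S p.1 p.2 →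
      Φ p (v + w) = Φ p v + Φ p w)
    {F K : aHom C} (hF : ∀ p : Ob × Ob, F p ∈ S p.1 p.2)
    (hK : ∀ p : Ob × Ob, K p ∈ S p.1 p.2) :
    pushf τ Φ (F + K) = pushf τ Φ F + pushf τ Φ K := by
  have h1 : (F + K).support ⊆ F.support ∪ K.support := DFinsupp.support_add
  rw [pushf_eq_sum hΦ0 h1,
    pushf_eq_sum hΦ0 (Finset.subset_union_left (s₂ := K.support)),
    pushf_eq_sum hΦ0 (Finset.subset_union_right (s₁ := F.support)),
    ← Finset.sum_add_distrib]
  refine Finset.sum_congr rfl fun p _ => ?_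
  rw [DFinsupp.add_apply, hΦadd p _ _ (hF p) (hK p), DFinsupp.single_add]

lemma pushf_neg {S : ∀ y x : Ob, Submodule R (C.Hom y x)}
    (hΦ0 : ∀ p, Φ p 0 = 0)
    (hΦadd : ∀ (p : Ob × Ob) (v w : C.Hom p.1 p.2), v ∈ S p.1 p.2 → w ∈ S p.1 p.2 →
      Φ p (v + w) = Φ p v + Φ p w)
    {F : aHom C} (hF : ∀ p : Ob × Ob, F p ∈ S p.1 p.2) :
    pushf τ Φ (-F) = -pushf τ Φ F := by
  have hFn : ∀ p : Ob × Ob, (-F) p ∈ S p.1 p.2 := fun p => by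
    rw [DFinsupp.neg_apply]; exact neg_mem (hF p)
  have h := pushf_add (τ := τ) hΦ0 hΦadd hFn hF
  rw [neg_add_cancel, pushf_zero] at h
  exact eq_neg_of_add_eq_zero_left h.symm

lemma pushf_sum {S : ∀ y x : Ob, Submodule R (C.Hom y x)}
    (hΦ0 : ∀ p, Φ p 0 = 0)
    (hΦadd : ∀ (p : Ob × Ob) (v w : C.Hom p.1 p.2), v ∈ S p.1 p.2 → w ∈ S p.1 p.2 →
      Φ p (v + w) = Φ p v + Φ p w)
    {ι : Type*} (s : Finset ι) (f : ι → aHom C)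
    (hf : ∀ i ∈ s, ∀ p : Ob × Ob, f i p ∈ S p.1 p.2) :
    pushf τ Φ (∑ i ∈ s, f i) = ∑ i ∈ s, pushf τ Φ (f i) := by
  classical
  induction s using Finset.cons_induction with
  | empty => simpa using pushf_zero (τ := τ) (Φ := Φ)
  | cons i s hi ih =>
    rw [Finset.sum_cons, Finset.sum_cons,
      pushf_add hΦ0 hΦadd (hf i (Finset.mem_cons_self i s))
        (fun p => (pointwise C S).sum_mem
          (fun j hj => hf j (Finset.mem_cons_of_mem hj) : ∀ j ∈ s, f j ∈ pointwise C S) p),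
      ih fun j hj => hf j (Finset.mem_cons_of_mem hj)]

lemma pushf_apply_eq (hΦ0 : ∀ p, Φ p 0 = 0) {F : aHom C} (p : Ob × Ob)
    (hinj : ∀ q ∈ F.support, τ q = τ p → q = p) :
    pushf τ Φ F (τ p) = Φ p (F p) := by
  rw [pushf, DFinsupp.sum, DFinsupp.finset_sum_apply]
  by_cases hp : p ∈ F.support
  · exact (Finset.sum_eq_single p
      (fun q hq hqp => DFinsupp.single_eq_of_ne fun h => hqp (hinj q hq h.symm))
      (fun h => absurd hp h)).trans DFinsupp.single_eq_same
  · rw [DFinsupp.notMem_support_iff.mp hp, hΦ0]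
    exact Finset.sum_eq_zero fun q hq =>
      DFinsupp.single_eq_of_ne fun h => hp (by rwa [hinj q hq h.symm] at hq)

lemma pushf_support {F : aHom C} {q : Ob' × Ob'} (hq : pushf τ Φ F q ≠ 0) :
    ∃ p ∈ F.support, τ p = q := by
  by_contra h
  push_neg at h
  apply hq
  rw [pushf, DFinsupp.sum, DFinsupp.finset_sum_apply]
  exact Finset.sum_eq_zero fun p hp => DFinsupp.single_eq_of_ne (h p hp).symm

end Pushf

section ElemMul

variable (C : RSemicat.{u, v, w} R Ob)

/-- The elementary product of two matrix units in `a(C)`. -/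
def elemMul (p q : Ob × Ob) (v : C.Hom p.1 p.2) (w : C.Hom q.1 q.2) : aHom C :=
  if h : p.2 = q.1 then
    DFinsupp.single (⟨p.1, q.2⟩ : Ob × Ob) (C.comp v (cast (by rw [h]) w))
  else 0

lemma aMul_def (F K : aHom C) :
    aMul C F K = F.sum fun p v => K.sum fun q w => elemMul C p q v w := rfl

variable {C}

lemma elemMul_eq (y x u : Ob) (v : C.Hom y x) (w : C.Hom x u) :
    elemMul C (y, x) (x, u) v w = DFinsupp.single (⟨y, u⟩ : Ob × Ob) (C.comp v w) := by
  unfold elemMul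
  exact dif_pos rfl

lemma elemMul_ne {p q : Ob × Ob} (h : p.2 ≠ q.1) (v : C.Hom p.1 p.2) (w : C.Hom q.1 q.2) :
    elemMul C p q v w = 0 := dif_neg h

lemma elemMul_zero_left (p q : Ob × Ob) (w : C.Hom q.1 q.2) :
    elemMul C p q (0 : C.Hom p.1 p.2) w = 0 := by
  obtain ⟨y, x⟩ := p; obtain ⟨x', u⟩ := q
  by_cases h : x = x'
  · subst h; rw [elemMul_eq, C.comp_zero_left, DFinsupp.single_zero]
  · exact elemMul_ne h _ _

lemma elemMul_zero_right (p q : Ob × Ob) (v : C.Hom p.1 p.2) :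
    elemMul C p q v (0 : C.Hom q.1 q.2) = 0 := by
  obtain ⟨y, x⟩ := p; obtain ⟨x', u⟩ := q
  by_cases h : x = x'
  · subst h; rw [elemMul_eq, C.comp_zero_right, DFinsupp.single_zero]
  · exact elemMul_ne h _ _

lemma elemMul_add_left (p q : Ob × Ob) (v v' : C.Hom p.1 p.2) (w : C.Hom q.1 q.2) :
    elemMul C p q (v + v') w = elemMul C p q v w + elemMul C p q v' w := by
  obtain ⟨y, x⟩ := p; obtain ⟨x', u⟩ := q
  by_cases h : x = x'
  · subst h; rw [elemMul_eq, elemMul_eq, elemMul_eq, C.comp_add_left, DFinsupp.single_add]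
  · rw [elemMul_ne h, elemMul_ne h, elemMul_ne h, add_zero]

lemma elemMul_add_right (p q : Ob × Ob) (v : C.Hom p.1 p.2) (w w' : C.Hom q.1 q.2) :
    elemMul C p q v (w + w') = elemMul C p q v w + elemMul C p q v w' := by
  obtain ⟨y, x⟩ := p; obtain ⟨x', u⟩ := q
  by_cases h : x = x'
  · subst h; rw [elemMul_eq, elemMul_eq, elemMul_eq, C.comp_add_right, DFinsupp.single_add]
  · rw [elemMul_ne h, elemMul_ne h, elemMul_ne h, add_zero]

lemma elemMul_apply_mem {S T' U : ∀ y x : Ob, Submodule R (C.Hom y x)}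
    (hST : ∀ (z y x : Ob) (u : C.Hom z y) (f : C.Hom y x), u ∈ S z y → f ∈ T' y x →
      C.comp u f ∈ U z x)
    {p q : Ob × Ob} {v : C.Hom p.1 p.2} {w : C.Hom q.1 q.2}
    (hv : v ∈ S p.1 p.2) (hw : w ∈ T' q.1 q.2) (j : Ob × Ob) :
    elemMul C p q v w j ∈ U j.1 j.2 := by
  obtain ⟨y, x⟩ := p; obtain ⟨x', u⟩ := q
  by_cases h : x = x'
  · subst h
    rw [elemMul_eq]
    refine single_apply_mem C U ?_ j
    exact hST y x u v w hv hw
  · rw [elemMul_ne h]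
    rw [DFinsupp.zero_apply]; exact zero_mem _

lemma aMul_apply_mem {S T' U : ∀ y x : Ob, Submodule R (C.Hom y x)}
    {F K : aHom C} (hF : ∀ p : Ob × Ob, F p ∈ S p.1 p.2)
    (hK : ∀ p : Ob × Ob, K p ∈ T' p.1 p.2)
    (hST : ∀ (z y x : Ob) (u : C.Hom z y) (f : C.Hom y x), u ∈ S z y → f ∈ T' y x →
      C.comp u f ∈ U z x)
    (j : Ob × Ob) : aMul C F K j ∈ U j.1 j.2 := by
  rw [aMul_def, DFinsupp.sum, DFinsupp.finset_sum_apply]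
  refine Submodule.sum_mem _ fun p hp => ?_
  show (DFinsupp.sum K fun q w => elemMul C p q (F p) w) j ∈ U j.1 j.2
  rw [DFinsupp.sum, DFinsupp.finset_sum_apply]
  exact Submodule.sum_mem _ fun q hq => elemMul_apply_mem hST (hF p) (hK q) j

lemma aMul_add_left (F F' K : aHom C) :
    aMul C (F + F') K = aMul C F K + aMul C F' K := by
  rw [aMul_def, aMul_def, aMul_def]
  exact DFinsupp.sum_add_index
    (fun p => DFinsupp.sum_eq_zero fun q => elemMul_zero_left p q (K q))
    (fun p v v' => by
      simp only [DFinsupp.sum]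
      rw [← Finset.sum_add_distrib]
      exact Finset.sum_congr rfl fun q _ => elemMul_add_left p q v v' (K q))

lemma aMul_add_right (F K K' : aHom C) :
    aMul C F (K + K') = aMul C F K + aMul C F K' := by
  rw [aMul_def, aMul_def, aMul_def, ← DFinsupp.sum_add]
  simp only [DFinsupp.sum]
  refine Finset.sum_congr rfl fun p _ => ?_
  rw [← DFinsupp.sum, ← DFinsupp.sum, ← DFinsupp.sum]
  exact DFinsupp.sum_add_index
    (fun q => elemMul_zero_right p q (F p))
    (fun q w w' => elemMul_add_right p q (F p) w w')

lemma aMul_zero_left (K : aHom C) : aMul C 0 K = 0 := by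
  rw [aMul_def]; exact DFinsupp.sum_zero_index

lemma aMul_zero_right (F : aHom C) : aMul C F 0 = 0 := by
  rw [aMul_def]
  exact DFinsupp.sum_eq_zero fun p => DFinsupp.sum_zero_index

lemma aMul_single_single (p q : Ob × Ob) (v : C.Hom p.1 p.2) (w : C.Hom q.1 q.2) :
    aMul C (DFinsupp.single p v) (DFinsupp.single q w) = elemMul C p q v w := by
  rw [aMul_def]
  rw [DFinsupp.sum_single_index
    (by exact DFinsupp.sum_eq_zero fun q' => elemMul_zero_left p q' _)]
  exact DFinsupp.sum_single_index (elemMul_zero_right p q v)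

lemma aMul_sum_left {ι : Type*} (s : Finset ι) (f : ι → aHom C) (K : aHom C) :
    aMul C (∑ i ∈ s, f i) K = ∑ i ∈ s, aMul C (f i) K := by
  classical
  induction s using Finset.cons_induction with
  | empty => simpa using aMul_zero_left K
  | cons i s hi ih => rw [Finset.sum_cons, Finset.sum_cons, aMul_add_left, ih]

lemma aMul_sum_right {ι : Type*} (s : Finset ι) (F : aHom C) (k : ι → aHom C) :
    aMul C F (∑ i ∈ s, k i) = ∑ i ∈ s, aMul C F (k i) := by
  classical
  induction s using Finset.cons_induction with
  | empty => simpa using aMul_zero_right F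
  | cons i s hi ih => rw [Finset.sum_cons, Finset.sum_cons, aMul_add_right, ih]

end ElemMul

section PushfComp

variable {C : RSemicat.{u, v, w} R Ob} {D : RSemicat.{u, v', w'} R Ob'}

universe v'' w''

lemma pushf_pushf {Ob'' : Type v''} {E : RSemicat.{u, v'', w''} R Ob''}
    {τ : Ob × Ob → Ob' × Ob'} {Φ : ∀ p : Ob × Ob, C.Hom p.1 p.2 → D.Hom (τ p).1 (τ p).2}
    {τ' : Ob' × Ob' → Ob'' × Ob''}
    {Φ' : ∀ p : Ob' × Ob', D.Hom p.1 p.2 → E.Hom (τ' p).1 (τ' p).2}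
    {S' : ∀ y x : Ob', Submodule R (D.Hom y x)}
    (hΦ0 : ∀ p, Φ p 0 = 0) (hΦ'0 : ∀ p, Φ' p 0 = 0)
    (hΦ'add : ∀ (p : Ob' × Ob') (v w : D.Hom p.1 p.2), v ∈ S' p.1 p.2 → w ∈ S' p.1 p.2 →
      Φ' p (v + w) = Φ' p v + Φ' p w)
    {F : aHom C} (hmem : ∀ p, Φ p (F p) ∈ S' (τ p).1 (τ p).2) :
    pushf τ' Φ' (pushf τ Φ F) =
      ∑ p ∈ F.support, DFinsupp.single (τ' (τ p)) (Φ' (τ p) (Φ p (F p))) := by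
  rw [pushf_eq_sum (F := F) hΦ0 (Finset.Subset.refl _),
    pushf_sum hΦ'0 hΦ'add F.support _
      (fun p _ q => single_apply_mem D S' (hmem p) q)]
  exact Finset.sum_congr rfl fun p _ => pushf_single hΦ'0 _ _

end PushfComp

section PA

variable {𝒢 : AlgGroupoid G} {C : RSemicat.{u, v, w} R Ob} {a : SemicatActionData R G C}

lemma aAct_eq_pushf (a : SemicatActionData R G C) (g : G) :
    aAct a g = pushf (fun p : Ob × Ob => (a.act₀ g p.1, a.act₀ g p.2))
      (fun p v => a.act g v) := rfl

lemma aPhiRing_eq_pushf {D : RSemicat.{u, v', w'} R Ob'} (ι : Ob → Ob')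
    (φ : ∀ (e : G) {y x : Ob}, C.Hom y x → D.Hom (ι y) (ι x)) (e : G) :
    aPhiRing ι φ e = pushf (fun p : Ob × Ob => (ι p.1, ι p.2))
      (fun p v => φ e v) := rfl

variable (hpa : IsSemicatPartialAction 𝒢 C a)
include hpa

lemma act_zero (g : G) (y x : Ob) : a.act g (0 : C.Hom y x) = 0 := by
  obtain ⟨-, -, -, -, -, hadd, -⟩ := hpa
  have h := hadd g y x 0 0 (zero_mem _) (zero_mem _)
  rw [add_zero] at h
  exact (left_eq_add.mp h)

lemma mem_D₀_of_ne {g : G} {y x : Ob} {f : C.Hom y x} (hf : f ∈ a.I g y x)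
    (h0 : f ≠ 0) : y ∈ a.D₀ g ∧ x ∈ a.D₀ g := by
  obtain ⟨-, hbot, -⟩ := hpa
  by_contra h
  rw [hbot g y x h] at hf
  exact h0 (by simpa using hf)

lemma I_le_rI {g : G} {y x : Ob} {f : C.Hom y x} (hf : f ∈ a.I g y x) :
    f ∈ a.I (𝒢.r g) y x := (hpa.2.2.1 g).1 y x hf

lemma I_inv_le_dI {g : G} {y x : Ob} {f : C.Hom y x} (hf : f ∈ a.I (𝒢.inv g) y x) :
    f ∈ a.I (𝒢.d g) y x := by
  have h := (hpa.2.2.1 (𝒢.inv g)).1 y x hf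
  rwa [𝒢.r_inv] at h

lemma act₀_mem {g : G} {x : Ob} (hx : x ∈ a.D₀ (𝒢.inv g)) : a.act₀ g x ∈ a.D₀ g :=
  hpa.1.2.2.2.2.1 g x hx

lemma act₀_inv_act₀ {g : G} {x : Ob} (hx : x ∈ a.D₀ (𝒢.inv g)) :
    a.act₀ (𝒢.inv g) (a.act₀ g x) = x := hpa.1.2.2.2.2.2.1 g x hx

lemma act₀_mem' {g : G} {x : Ob} (hx : x ∈ a.D₀ g) : a.act₀ (𝒢.inv g) x ∈ a.D₀ (𝒢.inv g) := by
  refine act₀_mem hpa ?_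
  rwa [𝒢.inv_inv']

lemma act₀_act₀_inv {g : G} {x : Ob} (hx : x ∈ a.D₀ g) :
    a.act₀ g (a.act₀ (𝒢.inv g) x) = x := by
  have hx' : x ∈ a.D₀ (𝒢.inv (𝒢.inv g)) := by rwa [𝒢.inv_inv']
  have h := act₀_inv_act₀ hpa (g := 𝒢.inv g) hx'
  rwa [𝒢.inv_inv'] at h

lemma act₀_injOn {g : G} {x y : Ob} (hx : x ∈ a.D₀ (𝒢.inv g)) (hy : y ∈ a.D₀ (𝒢.inv g))
    (h : a.act₀ g x = a.act₀ g y) : x = y := by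
  rw [← act₀_inv_act₀ hpa hx, ← act₀_inv_act₀ hpa hy, h]

lemma act_mem {g : G} {y x : Ob} {f : C.Hom y x} (hf : f ∈ a.I (𝒢.inv g) y x) :
    a.act g f ∈ a.I g (a.act₀ g y) (a.act₀ g x) := hpa.2.2.2.2.1 g y x f hf

lemma act_inv_act {g : G} {y x : Ob} {f : C.Hom y x} (hf : f ∈ a.I (𝒢.inv g) y x) :
    HEq (a.act (𝒢.inv g) (a.act g f)) f := by
  have h1 : a.act g f ∈ a.I (𝒢.inv (𝒢.inv g)) (a.act₀ g y) (a.act₀ g x) := by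
    rw [𝒢.inv_inv']; exact act_mem hpa hf
  have h2 := hpa.2.2.2.2.2.2.2.2.2.2.2.2 (𝒢.inv g) g (𝒢.comp_inv_left g) y x f hf h1
  have h3 : f ∈ a.I (𝒢.d g) y x := I_inv_le_dI hpa hf
  have h4 := hpa.2.2.2.2.2.2.2.2.2.2.1 (𝒢.d g) (𝒢.d_mem_units g) y x f h3
  exact h2.trans h4

end PA

section GlobalAct

variable {𝒢 : AlgGroupoid G} {D : RSemicat.{u, v', w'} R Ob'} {b : SemicatActionData R G D}

lemma sum_support_single {C : RSemicat.{u, v, w} R Ob} (F : aHom C) :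
    ∑ p ∈ F.support, DFinsupp.single p (F p) = F := DFinsupp.sum_single

variable (hgl : SemicatActionIsGlobal 𝒢 D b)
include hgl

lemma gI_d_le_inv {g : G} {y x : Ob'} {f : D.Hom y x} (hf : f ∈ b.I (𝒢.d g) y x) :
    f ∈ b.I (𝒢.inv g) y x := by
  have h := (hgl.2 (𝒢.inv g) g (𝒢.comp_inv_left g) y x f).1
  have he : 𝒢.inv (𝒢.mul (𝒢.inv g) g) = 𝒢.mul (𝒢.inv g) g :=
    𝒢.inv_unit (𝒢.d_mem_units g)
  rw [he] at h
  exact (h.mp hf).1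

lemma gI_r_le {g : G} {y x : Ob'} {f : D.Hom y x} (hf : f ∈ b.I (𝒢.r g) y x) :
    f ∈ b.I g y x := by
  have hf' : f ∈ b.I (𝒢.d (𝒢.inv g)) y x := by rwa [𝒢.d_inv]
  have h := gI_d_le_inv hgl hf'
  rwa [𝒢.inv_inv'] at h

lemma gD_d_le {g : G} {x : Ob'} (hx : x ∈ b.D₀ (𝒢.d g)) : x ∈ b.D₀ (𝒢.inv g) := by
  have h := (hgl.1 (𝒢.inv g) g (𝒢.comp_inv_left g)).1
  have he : 𝒢.inv (𝒢.mul (𝒢.inv g) g) = 𝒢.mul (𝒢.inv g) g :=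
    𝒢.inv_unit (𝒢.d_mem_units g)
  rw [he] at h
  have hx' : x ∈ {x ∈ b.D₀ (𝒢.inv g) | b.act₀ g x ∈ b.D₀ (𝒢.inv (𝒢.inv g))} := h ▸ hx
  exact hx'.1

lemma gD_r_le {g : G} {x : Ob'} (hx : x ∈ b.D₀ (𝒢.r g)) : x ∈ b.D₀ g := by
  have hx' : x ∈ b.D₀ (𝒢.d (𝒢.inv g)) := by rwa [𝒢.d_inv]
  have h := gD_d_le hgl hx'
  rwa [𝒢.inv_inv'] at h

variable (hpb : IsSemicatPartialAction 𝒢 D b)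
include hpb

lemma gI_iff {g : G} {y x : Ob'} (f : D.Hom y x) :
    f ∈ b.I g y x ↔ f ∈ b.I (𝒢.r g) y x :=
  ⟨fun h => I_le_rI hpb h, fun h => gI_r_le hgl h⟩

lemma gI_congr {g h : G} (hr : 𝒢.r h = 𝒢.r g) {y x : Ob'} {f : D.Hom y x}
    (hf : f ∈ b.I h y x) : f ∈ b.I g y x := by
  refine gI_r_le hgl ?_
  rw [← hr]
  exact I_le_rI hpb hf

lemma gD_iff {g : G} (x : Ob') : x ∈ b.D₀ g ↔ x ∈ b.D₀ (𝒢.r g) :=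
  ⟨fun h => hpb.1.2.1 g h, fun h => gD_r_le hgl h⟩

lemma gD_congr {g h : G} (hr : 𝒢.r h = 𝒢.r g) {x : Ob'}
    (hx : x ∈ b.D₀ h) : x ∈ b.D₀ g := by
  refine gD_r_le hgl ?_
  rw [← hr]
  exact hpb.1.2.1 h hx

end GlobalAct

section Mul

variable {C : RSemicat.{u, v, w} R Ob} {D : RSemicat.{u, v', w'} R Ob'}

lemma pushf_mul (t : Ob → Ob') (Φ : ∀ (y x : Ob), C.Hom y x → D.Hom (t y) (t x))
    (S : ∀ y x : Ob, Submodule R (C.Hom y x)) (Dom : Set Ob)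
    (hΦ0 : ∀ y x, Φ y x 0 = 0)
    (hΦadd : ∀ (y x : Ob) (v w : C.Hom y x), v ∈ S y x → w ∈ S y x →
      Φ y x (v + w) = Φ y x v + Φ y x w)
    (hScl : ∀ (z y x : Ob) (u : C.Hom z y) (f : C.Hom y x), u ∈ S z y → f ∈ S y x →
      C.comp u f ∈ S z x)
    (hΦcomp : ∀ (z y x : Ob) (u : C.Hom z y) (f : C.Hom y x), u ∈ S z y → f ∈ S y x →
      Φ z x (C.comp u f) = D.comp (Φ z y u) (Φ y x f))
    (htinj : ∀ y ∈ Dom, ∀ x ∈ Dom, t y = t x → y = x)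
    {F K : aHom C} (hF : ∀ p : Ob × Ob, F p ∈ S p.1 p.2)
    (hK : ∀ p : Ob × Ob, K p ∈ S p.1 p.2)
    (hFD : ∀ p : Ob × Ob, F p ≠ 0 → p.1 ∈ Dom ∧ p.2 ∈ Dom)
    (hKD : ∀ p : Ob × Ob, K p ≠ 0 → p.1 ∈ Dom ∧ p.2 ∈ Dom) :
    pushf (fun p : Ob × Ob => (t p.1, t p.2)) (fun p v => Φ p.1 p.2 v) (aMul C F K)
      = aMul D (pushf (fun p : Ob × Ob => (t p.1, t p.2)) (fun p v => Φ p.1 p.2 v) F)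
          (pushf (fun p : Ob × Ob => (t p.1, t p.2)) (fun p v => Φ p.1 p.2 v) K) := by
  have hrepr : aMul C F K = ∑ p ∈ F.support, ∑ q ∈ K.support, elemMul C p q (F p) (K q) :=
    aMul_def C F K
  have hΦ0' : ∀ p : Ob × Ob, (fun (p : Ob × Ob) (v : C.Hom p.1 p.2) => Φ p.1 p.2 v) p 0 = 0 :=
    fun p => hΦ0 p.1 p.2
  have hΦadd' : ∀ (p : Ob × Ob) (v w : C.Hom p.1 p.2), v ∈ S p.1 p.2 → w ∈ S p.1 p.2 →
      Φ p.1 p.2 (v + w) = Φ p.1 p.2 v + Φ p.1 p.2 w := fun p => hΦadd p.1 p.2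
  have hout : ∀ p ∈ F.support, ∀ j : Ob × Ob,
      (∑ q ∈ K.support, elemMul C p q (F p) (K q)) j ∈ S j.1 j.2 := by
    intro p _ j
    rw [DFinsupp.finset_sum_apply]
    exact Submodule.sum_mem _ fun q _ => elemMul_apply_mem hScl (hF p) (hK q) j
  rw [hrepr, pushf_sum (S := S) hΦ0' hΦadd' _ _ hout,
    pushf_eq_sum (F := F) hΦ0' (Finset.Subset.refl _),
    pushf_eq_sum (F := K) hΦ0' (Finset.Subset.refl _), aMul_sum_left]
  refine Finset.sum_congr rfl fun p hp => ?_
  rw [pushf_sum (S := S) hΦ0' hΦadd' _ _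
      (fun q _ j => elemMul_apply_mem hScl (hF p) (hK q) j), aMul_sum_right]
  refine Finset.sum_congr rfl fun q hq => ?_
  rw [aMul_single_single]
  obtain ⟨hp1, hp2⟩ := hFD p (DFinsupp.mem_support_iff.mp hp)
  obtain ⟨hq1, hq2⟩ := hKD q (DFinsupp.mem_support_iff.mp hq)
  obtain ⟨p1, p2⟩ := p
  obtain ⟨q1, q2⟩ := q
  by_cases h : p2 = q1
  · subst h
    rw [elemMul_eq, pushf_single hΦ0', elemMul_eq]
    rw [hΦcomp p1 p2 q2 _ _ (hF (p1, p2)) (hK (p2, q2))]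
  · rw [elemMul_ne h, pushf_zero,
      elemMul_ne (fun he => h (htinj p2 hp2 q1 hq1 he)) _ _]

end Mul

section PA2

variable {𝒢 : AlgGroupoid G} {C : RSemicat.{u, v, w} R Ob} {a : SemicatActionData R G C}
variable (hpa : IsSemicatPartialAction 𝒢 C a)
include hpa

lemma aAct_zero (g : G) : aAct a g (0 : aHom C) = 0 := by
  rw [aAct_eq_pushf]
  exact pushf_zero

lemma aAct_sum (g : G) {ι : Type*} (s : Finset ι) (f : ι → aHom C)
    (hf : ∀ i ∈ s, ∀ p : Ob × Ob, f i p ∈ a.I (𝒢.inv g) p.1 p.2) :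
    aAct a g (∑ i ∈ s, f i) = ∑ i ∈ s, aAct a g (f i) := by
  rw [aAct_eq_pushf]
  exact pushf_sum (fun p => act_zero hpa g p.1 p.2)
    (fun p v w hv hw => hpa.2.2.2.2.2.1 g p.1 p.2 v w hv hw) s f hf

lemma aAct_single (g : G) (p : Ob × Ob) (v : C.Hom p.1 p.2) :
    aAct a g (DFinsupp.single p v)
      = DFinsupp.single (⟨a.act₀ g p.1, a.act₀ g p.2⟩ : Ob × Ob) (a.act g v) := by
  rw [aAct_eq_pushf]
  exact pushf_single (fun q => act_zero hpa g q.1 q.2) p v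

lemma aAct_apply (g : G) {F : aHom C} (hF : ∀ p : Ob × Ob, F p ∈ a.I (𝒢.inv g) p.1 p.2)
    {p : Ob × Ob} (hp1 : p.1 ∈ a.D₀ (𝒢.inv g)) (hp2 : p.2 ∈ a.D₀ (𝒢.inv g)) :
    aAct a g F (⟨a.act₀ g p.1, a.act₀ g p.2⟩ : Ob × Ob) = a.act g (F p) := by
  rw [aAct_eq_pushf]
  refine pushf_apply_eq (fun q => act_zero hpa g q.1 q.2) p (fun q hq hqe => ?_)
  obtain ⟨hq1, hq2⟩ := mem_D₀_of_ne hpa (hF q) (DFinsupp.mem_support_iff.mp hq)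
  obtain ⟨p1, p2⟩ := p
  obtain ⟨q1, q2⟩ := q
  simp only [Prod.mk.injEq] at hqe ⊢
  exact ⟨act₀_injOn hpa hq1 hp1 hqe.1, act₀_injOn hpa hq2 hp2 hqe.2⟩

end PA2

end Stmt15Aux

end Stmt15Aux

open Stmt15Aux in
/-- Let `C` and `T` be `R`-categories carrying partial
actions `α` and `β` of a groupoid `𝒢` such that `(T, β)` is a globalization
of `(C, α)` with structural faithful semifunctors `φ_e`. Then the induced
global action `β_{a(T)}` of `𝒢` on the ring `a(T)` is a globalization (in
the ring sense) of the induced partial action `α_{a(C)}` on `a(C)`, via the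
ring monomorphisms `ψ_e : a(C)_e → a(T)_e` induced by the `φ_e`. -/
theorem stmt15 {R : Type u} [CommRing R] {G : Type u₂} {Ob : Type v} {Ob' : Type v'}
    (𝒢 : AlgGroupoid G) (C : RSemicat.{u, v, w} R Ob) (T : RSemicat.{u, v', w'} R Ob')
    (a : SemicatActionData R G C) (gd : GlobalizationData R G C T)
    (hC : C.HasIdentities) (hT : T.HasIdentities)
    (hpa : IsSemicatPartialAction 𝒢 C a)
    (hg : IsGlobalization 𝒢 C a T gd) :
    IsRingGlobalization 𝒢
      (aMul C) (fun g => aIdealSet C a g) (fun g => aAct a g)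
      (aMul T) (fun g => aIdealSet T gd.b g) (fun g => aAct gd.b g)
      (fun e => aPhiRing gd.ι gd.φ e) := by
  classical
  obtain ⟨hι, hpb, hgl, hunitobj, hobjiff, hiact, hφ, habsl, habsr, hc3, hc4, hc5⟩ := hg
  have hbadd : ∀ (g : G) (p : Ob' × Ob') (v w : T.Hom p.1 p.2),
      v ∈ gd.b.I (𝒢.inv g) p.1 p.2 → w ∈ gd.b.I (𝒢.inv g) p.1 p.2 →
      gd.b.act g (v + w) = gd.b.act g v + gd.b.act g w :=
    fun g p v w hv hw => hpb.2.2.2.2.2.1 g p.1 p.2 v w hv hw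
  have hb0 : ∀ (g : G) (p : Ob' × Ob'), gd.b.act g (0 : T.Hom p.1 p.2) = 0 :=
    fun g p => act_zero hpb g p.1 p.2
  have hpbI := hpb.2.2.1
  have hpbId := hpb.2.2.2.1
  have hDN0 : ∀ g : G, (0 : aHom T) ∈ aIdealSet T gd.b g := fun g p => by
    rw [DFinsupp.zero_apply]; exact zero_mem _
  have hDNadd : ∀ g : G, ∀ F ∈ aIdealSet T gd.b g, ∀ K ∈ aIdealSet T gd.b g,
      F + K ∈ aIdealSet T gd.b g := fun g F hF K hK p => by
    rw [DFinsupp.add_apply]; exact add_mem (hF p) (hK p)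
  have hDNneg : ∀ g : G, ∀ F ∈ aIdealSet T gd.b g, -F ∈ aIdealSet T gd.b g :=
    fun g F hF p => by rw [DFinsupp.neg_apply]; exact neg_mem (hF p)
  have hmulN : ∀ g : G, ∀ F ∈ aIdealSet T gd.b (𝒢.inv g), ∀ K ∈ aIdealSet T gd.b (𝒢.inv g),
      aAct gd.b g (aMul T F K) = aMul T (aAct gd.b g F) (aAct gd.b g K) := by
    intro g F hF K hK
    exact pushf_mul (gd.b.act₀ g) (fun y x v => gd.b.act g v) (gd.b.I (𝒢.inv g))
      (gd.b.D₀ (𝒢.inv g)) (fun y x => act_zero hpb g y x)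
      (fun y x v w hv hw => hpb.2.2.2.2.2.1 g y x v w hv hw)
      (fun z y x u f hu hf => (hpbI (𝒢.inv g)).2.1 z y x u f (I_le_rI hpb hu) hf)
      (fun z y x u f hu hf => hpb.2.2.2.2.2.2.2.2.2.1 g z y x u f hu hf)
      (fun y hy x hx he => act₀_injOn hpb hy hx he)
      hF hK (fun p hne => mem_D₀_of_ne hpb (hF p) hne)
      (fun p hne => mem_D₀_of_ne hpb (hK p) hne)
  have hcompose : ∀ g h : G, 𝒢.comp g h → ∀ X : aHom T,
      (∀ p : Ob' × Ob', X p ∈ gd.b.I (𝒢.inv h) p.1 p.2) →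
      (∀ p : Ob' × Ob', aAct gd.b h X p ∈ gd.b.I (𝒢.inv g) p.1 p.2) →
      aAct gd.b g (aAct gd.b h X) = aAct gd.b (𝒢.mul g h) X := by
    intro g h hcomp X hX hX2
    have hmemgh : ∀ p ∈ X.support, X p ∈ gd.b.I (𝒢.inv (𝒢.mul g h)) p.1 p.2 := by
      intro p hp
      obtain ⟨h1, h2⟩ := mem_D₀_of_ne hpb (hX p) (DFinsupp.mem_support_iff.mp hp)
      refine ((hgl.2 g h hcomp p.1 p.2 (X p)).1).mpr ⟨hX p, ?_⟩
      have hev := aAct_apply hpb h hX h1 h2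
      rw [← hev]
      exact hX2 (gd.b.act₀ h p.1, gd.b.act₀ h p.2)
    have hmemint : ∀ p : Ob' × Ob',
        gd.b.act h (X p) ∈ gd.b.I (𝒢.inv g) (gd.b.act₀ h p.1) (gd.b.act₀ h p.2) := by
      intro p
      by_cases hp : p ∈ X.support
      · obtain ⟨h1, h2⟩ := mem_D₀_of_ne hpb (hX p) (DFinsupp.mem_support_iff.mp hp)
        have hev := aAct_apply hpb h hX h1 h2
        rw [← hev]
        exact hX2 (gd.b.act₀ h p.1, gd.b.act₀ h p.2)
      · rw [DFinsupp.notMem_support_iff.mp hp, hb0 h]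
        exact zero_mem _
    rw [aAct_eq_pushf (a := gd.b) (g := g), aAct_eq_pushf (a := gd.b) (g := h),
      pushf_pushf (fun p => hb0 h p) (fun p => hb0 g p) (hbadd g) hmemint,
      aAct_eq_pushf (a := gd.b) (g := 𝒢.mul g h),
      pushf_eq_sum (F := X) (fun p => hb0 (𝒢.mul g h) p) (Finset.Subset.refl _)]
    refine Finset.sum_congr rfl fun p hp => ?_
    have hgh := hmemgh p hp
    obtain ⟨hg1, hg2⟩ := mem_D₀_of_ne hpb hgh (DFinsupp.mem_support_iff.mp hp)
    have hobj := hgl.1 g h hcomp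
    obtain ⟨p1, p2⟩ := p
    refine single_heq T ?_ ?_
    · show (gd.b.act₀ g (gd.b.act₀ h p1), gd.b.act₀ g (gd.b.act₀ h p2)) = _
      rw [hobj.2 p1 hg1, hobj.2 p2 hg2]
    · exact (hgl.2 g h hcomp p1 p2 (X (p1, p2))).2 hgh
  have hφadd : ∀ e ∈ 𝒢.units, ∀ (y x : Ob) (f f' : C.Hom y x), f ∈ a.I e y x →
      f' ∈ a.I e y x → gd.φ e (f + f') = gd.φ e f + gd.φ e f' := fun e he => (hφ e he).1
  have hφ0 : ∀ e ∈ 𝒢.units, ∀ (y x : Ob), gd.φ e (0 : C.Hom y x) = 0 := by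
    intro e he y x
    have h := (hφ e he).1 y x 0 0 (zero_mem _) (zero_mem _)
    rw [add_zero] at h
    exact left_eq_add.mp h
  have hφmem : ∀ e ∈ 𝒢.units, ∀ (y x : Ob) (f : C.Hom y x), f ∈ a.I e y x →
      gd.φ e f ∈ gd.b.I e (gd.ι y) (gd.ι x) := fun e he => (hφ e he).2.2.2.2
  have hιinj2 : ∀ (p q : Ob × Ob),
      ((gd.ι p.1, gd.ι p.2) : Ob' × Ob') = (gd.ι q.1, gd.ι q.2) → p = q := by
    intro p q h
    obtain ⟨p1, p2⟩ := p; obtain ⟨q1, q2⟩ := q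
    simp only [Prod.mk.injEq] at h ⊢
    exact ⟨hι h.1, hι h.2⟩
  have hψ_apply : ∀ e ∈ 𝒢.units, ∀ (F : aHom C) (p : Ob × Ob),
      aPhiRing gd.ι gd.φ e F (⟨gd.ι p.1, gd.ι p.2⟩ : Ob' × Ob') = gd.φ e (F p) := by
    intro e he F p
    rw [aPhiRing_eq_pushf]
    exact pushf_apply_eq (fun q => hφ0 e he q.1 q.2) p (fun q hq hqe => hιinj2 q p hqe)
  have hψ_zero : ∀ e : G, aPhiRing gd.ι gd.φ e (0 : aHom C) = 0 := by
    intro e; rw [aPhiRing_eq_pushf]; exact pushf_zero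
  have hψ_add : ∀ e ∈ 𝒢.units, ∀ F ∈ aIdealSet C a e, ∀ K ∈ aIdealSet C a e,
      aPhiRing gd.ι gd.φ e (F + K) = aPhiRing gd.ι gd.φ e F + aPhiRing gd.ι gd.φ e K := by
    intro e he F hF K hK
    rw [aPhiRing_eq_pushf]
    exact pushf_add (fun q => hφ0 e he q.1 q.2)
      (fun p v w hv hw => hφadd e he p.1 p.2 v w hv hw) hF hK
  have hψ_mem : ∀ e ∈ 𝒢.units, ∀ F ∈ aIdealSet C a e,
      aPhiRing gd.ι gd.φ e F ∈ aIdealSet T gd.b e := by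
    intro e he F hF p
    rw [aPhiRing_eq_pushf]
    exact pushf_apply_mem (gd.b.I e) (fun q _ => hφmem e he q.1 q.2 (F q) (hF q)) p
  have hψ_single : ∀ e ∈ 𝒢.units, ∀ (p : Ob × Ob) (v : C.Hom p.1 p.2),
      aPhiRing gd.ι gd.φ e (DFinsupp.single p v)
        = DFinsupp.single (⟨gd.ι p.1, gd.ι p.2⟩ : Ob' × Ob') (gd.φ e v) := by
    intro e he p v
    rw [aPhiRing_eq_pushf]
    exact pushf_single (fun q => hφ0 e he q.1 q.2) p v
  have hDM0 : ∀ e : G, (0 : aHom C) ∈ aIdealSet C a e := fun e p => by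
    rw [DFinsupp.zero_apply]; exact zero_mem _
  have hIe_cl : ∀ e : G, ∀ (z y x : Ob) (u : C.Hom z y) (f : C.Hom y x), u ∈ a.I e z y →
      f ∈ a.I e y x → C.comp u f ∈ a.I e z x :=
    fun e z y x u f hu hf => (hpa.2.2.1 e).2.1 z y x u f (I_le_rI hpa hu) hf
  have hψ_sum : ∀ e ∈ 𝒢.units, ∀ {κ : Type v} (s : Finset κ) (f : κ → aHom C),
      (∀ i ∈ s, ∀ p : Ob × Ob, f i p ∈ a.I e p.1 p.2) →
      aPhiRing gd.ι gd.φ e (∑ i ∈ s, f i) = ∑ i ∈ s, aPhiRing gd.ι gd.φ e (f i) := by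
    intro e he κ s f hf
    rw [aPhiRing_eq_pushf]
    exact pushf_sum (fun q => hφ0 e he q.1 q.2)
      (fun p v w hv hw => hφadd e he p.1 p.2 v w hv hw) s f hf
  have r1 : ∀ (g : G) (x : Ob), x ∈ a.D₀ g →
      gd.b.act₀ g (gd.ι (a.act₀ (𝒢.inv g) x)) = gd.ι x := by
    intro g x hx
    have hx' : a.act₀ (𝒢.inv g) x ∈ a.D₀ (𝒢.inv g) := act₀_mem' hpa hx
    have h1 : gd.ι (a.act₀ g (a.act₀ (𝒢.inv g) x)) = gd.b.act₀ g (gd.ι (a.act₀ (𝒢.inv g) x)) :=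
      hiact g _ hx'
    rw [← h1, act₀_act₀_inv hpa hx]
  refine ⟨?_, ?_, ?_, ?_, ?_, ?_⟩
  · -- IsRingPartialAction on a(T)
    refine ⟨?_, ?_, ?_, ?_, ?_, ?_, ?_, ?_, ?_, ?_⟩
    · intro g
      refine ⟨Set.subset_univ _, hDN0 _, hDNadd _, hDNneg _, ?_⟩
      intro F _ K hK
      constructor
      · intro p
        exact aMul_apply_mem (S := fun y x => (⊤ : Submodule R (T.Hom y x)))
          (fun q => trivial) hK
          (fun z y x u f _ hf => (hpbId g).1 z y x u f hf) p
      · intro p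
        exact aMul_apply_mem (T' := fun y x => (⊤ : Submodule R (T.Hom y x)))
          hK (fun q => trivial)
          (fun z y x u f hu _ => (hpbId g).2 z y x u f hu) p
    · intro g
      refine ⟨fun F hF p => I_le_rI hpb (hF p), hDN0 _, hDNadd _, hDNneg _, ?_⟩
      intro F hF K hK
      constructor
      · intro p
        exact aMul_apply_mem hF hK
          (fun z y x u f hu hf => (hpbI g).2.1 z y x u f hu hf) p
      · intro p
        exact aMul_apply_mem hK hF
          (fun z y x u f hu hf => (hpbI g).2.2 z y x u f hu hf) p
    · intro g F hF p
      beta_reduce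
      rw [aAct_eq_pushf]
      exact pushf_apply_mem (gd.b.I g) (fun q _ => act_mem hpb (hF q)) p
    · intro g F hF
      beta_reduce
      have hadd' : ∀ (p : Ob' × Ob') (v w : T.Hom p.1 p.2), v ∈ gd.b.I g p.1 p.2 →
          w ∈ gd.b.I g p.1 p.2 →
          gd.b.act (𝒢.inv g) (v + w) = gd.b.act (𝒢.inv g) v + gd.b.act (𝒢.inv g) w := by
        intro p v w hv hw
        refine hpb.2.2.2.2.2.1 (𝒢.inv g) p.1 p.2 v w ?_ ?_ <;> rwa [𝒢.inv_inv']
      rw [aAct_eq_pushf, aAct_eq_pushf,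
        pushf_pushf (fun p => hb0 g p) (fun p => hb0 (𝒢.inv g) p) hadd'
          (fun p => act_mem hpb (hF p))]
      refine Eq.trans (Finset.sum_congr rfl ?_) (sum_support_single F)
      intro p hp
      obtain ⟨h1, h2⟩ := mem_D₀_of_ne hpb (hF p) (DFinsupp.mem_support_iff.mp hp)
      obtain ⟨p1, p2⟩ := p
      refine single_heq T ?_ ?_
      · show (gd.b.act₀ (𝒢.inv g) (gd.b.act₀ g p1), gd.b.act₀ (𝒢.inv g) (gd.b.act₀ g p2))
          = (p1, p2)
        rw [act₀_inv_act₀ hpb h1, act₀_inv_act₀ hpb h2]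
      · exact act_inv_act hpb (hF (p1, p2))
    · intro g K hK
      beta_reduce at hK ⊢
      have key : ∀ (y x : Ob'), y ∈ gd.b.D₀ (𝒢.inv g) → x ∈ gd.b.D₀ (𝒢.inv g) →
          ∀ (q1 q2 : Ob'), gd.b.act₀ g y = q1 → gd.b.act₀ g x = q2 →
          ∀ k : T.Hom q1 q2, k ∈ gd.b.I g q1 q2 →
          ∃ Fq : aHom T, (∀ p : Ob' × Ob', Fq p ∈ gd.b.I (𝒢.inv g) p.1 p.2) ∧
            aAct gd.b g Fq = DFinsupp.single (⟨q1, q2⟩ : Ob' × Ob') k := by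
        intro y x hy hx q1 q2 e1 e2 k hk
        subst e1; subst e2
        obtain ⟨f, hf, hact⟩ := hpb.2.2.2.2.2.2.2.2.1 g y hy x hx k hk
        refine ⟨DFinsupp.single (⟨y, x⟩ : Ob' × Ob') f, ?_, ?_⟩
        · intro p
          exact single_apply_mem T (gd.b.I (𝒢.inv g)) hf p
        · rw [aAct_eq_pushf, pushf_single (fun p => hb0 g p)]
          exact single_heq T rfl (heq_of_eq hact)
      have hex : ∀ q ∈ K.support, ∃ Fq : aHom T,
          (∀ p : Ob' × Ob', Fq p ∈ gd.b.I (𝒢.inv g) p.1 p.2) ∧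
          aAct gd.b g Fq = DFinsupp.single q (K q) := by
        intro q hq
        obtain ⟨h1, h2⟩ := mem_D₀_of_ne hpb (hK q) (DFinsupp.mem_support_iff.mp hq)
        obtain ⟨q1, q2⟩ := q
        exact key (gd.b.act₀ (𝒢.inv g) q1) (gd.b.act₀ (𝒢.inv g) q2)
          (act₀_mem' hpb h1) (act₀_mem' hpb h2) q1 q2
          (act₀_act₀_inv hpb h1) (act₀_act₀_inv hpb h2) (K (q1, q2)) (hK (q1, q2))
      choose! Fq hFmem hFact using hex
      refine ⟨∑ q ∈ K.support, Fq q, fun p => ?_, ?_⟩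
      · rw [DFinsupp.finset_sum_apply]
        refine Submodule.sum_mem _ fun q hq => hFmem q hq p
      · rw [aAct_eq_pushf,
          pushf_sum (S := gd.b.I (𝒢.inv g)) (fun p => hb0 g p) (hbadd g) _ _
            (fun q hq p => hFmem q hq p)]
        rw [show (∑ q ∈ K.support, pushf (fun p : Ob' × Ob' =>
            (gd.b.act₀ g p.1, gd.b.act₀ g p.2)) (fun p v => gd.b.act g v) (Fq q))
            = ∑ q ∈ K.support, DFinsupp.single q (K q) from
          Finset.sum_congr rfl fun q hq => by
            rw [← aAct_eq_pushf]; exact hFact q hq]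
        exact sum_support_single K
    · intro g F hF K hK
      beta_reduce
      rw [aAct_eq_pushf]
      exact pushf_add (fun p => hb0 g p) (hbadd g) hF hK
    · -- multiplicativity
      exact hmulN
    · intro e he F hF
      beta_reduce
      rw [aAct_eq_pushf, pushf_eq_sum (fun p => hb0 e p) (Finset.Subset.refl _)]
      refine Eq.trans (Finset.sum_congr rfl ?_) (sum_support_single F)
      intro p hp
      obtain ⟨h1, h2⟩ := mem_D₀_of_ne hpb (hF p) (DFinsupp.mem_support_iff.mp hp)
      obtain ⟨p1, p2⟩ := p
      refine single_heq T ?_ ?_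
      · show (gd.b.act₀ e p1, gd.b.act₀ e p2) = (p1, p2)
        rw [hpb.1.2.2.2.1 e he p1 h1, hpb.1.2.2.2.1 e he p2 h2]
      · exact hpb.2.2.2.2.2.2.2.2.2.2.1 e he p1 p2 _ (hF (p1, p2))
    · intro g h hcomp F hFg hFh p
      beta_reduce
      rw [aAct_eq_pushf]
      refine pushf_apply_mem _ (fun q _ => ?_) p
      exact hpb.2.2.2.2.2.2.2.2.2.2.2.1 g h hcomp q.1 q.2 (F q) (hFh q) (hFg q)
    · -- compatibility
      intro g h hcomp X hX hX2
      beta_reduce at hX hX2 ⊢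
      exact hcompose g h hcomp X hX hX2
  · -- RingActionIsGlobal
    intro g h hcomp
    constructor
    · intro X
      beta_reduce
      constructor
      · intro hX
        refine ⟨fun p => ((hgl.2 g h hcomp p.1 p.2 (X p)).1.mp (hX p)).1, ?_⟩
        intro p
        rw [aAct_eq_pushf]
        exact pushf_apply_mem (gd.b.I (𝒢.inv g))
          (fun q _ => ((hgl.2 g h hcomp q.1 q.2 (X q)).1.mp (hX q)).2) p
      · rintro ⟨hX1, hX2⟩ p
        by_cases hp : p ∈ X.support
        · obtain ⟨h1, h2⟩ := mem_D₀_of_ne hpb (hX1 p) (DFinsupp.mem_support_iff.mp hp)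
          refine ((hgl.2 g h hcomp p.1 p.2 (X p)).1).mpr ⟨hX1 p, ?_⟩
          have hev := aAct_apply hpb h hX1 h1 h2
          rw [← hev]
          exact hX2 (gd.b.act₀ h p.1, gd.b.act₀ h p.2)
        · rw [DFinsupp.notMem_support_iff.mp hp]
          exact zero_mem _
    · intro X hX
      beta_reduce at hX ⊢
      have hX1 : ∀ p : Ob' × Ob', X p ∈ gd.b.I (𝒢.inv h) p.1 p.2 :=
        fun p => ((hgl.2 g h hcomp p.1 p.2 (X p)).1.mp (hX p)).1
      have hX2 : ∀ p : Ob' × Ob', aAct gd.b h X p ∈ gd.b.I (𝒢.inv g) p.1 p.2 := by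
        intro p
        rw [aAct_eq_pushf]
        exact pushf_apply_mem (gd.b.I (𝒢.inv g))
          (fun q _ => ((hgl.2 g h hcomp q.1 q.2 (X q)).1.mp (hX q)).2) p
      exact hcompose g h hcomp X hX1 hX2
  · -- per-unit properties of ψ
    intro e he
    have himg0 : (0 : aHom T) ∈ aPhiRing gd.ι gd.φ e '' aIdealSet C a e :=
      ⟨0, hDM0 e, hψ_zero e⟩
    have himgadd : ∀ X Y : aHom T, X ∈ aPhiRing gd.ι gd.φ e '' aIdealSet C a e →
        Y ∈ aPhiRing gd.ι gd.φ e '' aIdealSet C a e →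
        X + Y ∈ aPhiRing gd.ι gd.φ e '' aIdealSet C a e := by
      rintro _ _ ⟨F, hF, rfl⟩ ⟨K, hK, rfl⟩
      exact ⟨F + K, fun p => by rw [DFinsupp.add_apply]; exact add_mem (hF p) (hK p),
        hψ_add e he F hF K hK⟩
    refine ⟨fun F hF => hψ_mem e he F hF, fun F hF K hK => hψ_add e he F hF K hK,
      ?_, ?_, ?_⟩
    · intro F hF K hK
      beta_reduce
      exact pushf_mul gd.ι (fun y x v => gd.φ e v) (a.I e) Set.univ
        (fun y x => hφ0 e he y x) (fun y x v w hv hw => hφadd e he y x v w hv hw)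
        (hIe_cl e) (fun z y x u f hu hf => (hφ e he).2.2.1 z y x u f hu hf)
        (fun y _ x _ hyx => hι hyx) hF hK (fun p _ => ⟨trivial, trivial⟩)
        (fun p _ => ⟨trivial, trivial⟩)
    · intro F hF K hK hFK
      beta_reduce at hFK
      ext p
      have h1 := hψ_apply e he F p
      have h2 := hψ_apply e he K p
      rw [hFK] at h1
      exact (hφ e he).2.2.2.1 p.1 p.2 (F p) (K p) (hF p) (hK p) (h1.symm.trans h2)
    · -- ideal pair
      refine ⟨?_, himg0, fun X hX Y hY => himgadd X Y hX hY, ?_, ?_⟩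
      · rintro _ ⟨F, hF, rfl⟩
        exact hψ_mem e he F hF
      · rintro _ ⟨F, hF, rfl⟩
        refine ⟨-F, fun p => by rw [DFinsupp.neg_apply]; exact neg_mem (hF p), ?_⟩
        beta_reduce
        rw [aPhiRing_eq_pushf]
        exact pushf_neg (fun q => hφ0 e he q.1 q.2)
          (fun p v w hv hw => hφadd e he p.1 p.2 v w hv hw) hF
      · intro U hU Y hY
        obtain ⟨F, hF, rfl⟩ := hY
        beta_reduce at hU
        constructor
        · -- aMul U (ψ F) ∈ image
          rw [aMul_def T U (aPhiRing gd.ι gd.φ e F)]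
          show (∑ q ∈ U.support, ∑ r ∈ (aPhiRing gd.ι gd.φ e F).support,
            elemMul T q r (U q) ((aPhiRing gd.ι gd.φ e F) r))
              ∈ aPhiRing gd.ι gd.φ e '' aIdealSet C a e
          refine Finset.sum_induction _ _ himgadd himg0 fun q _ => ?_
          refine Finset.sum_induction _ _ himgadd himg0 fun r hr => ?_
          have hr' := DFinsupp.mem_support_iff.mp hr
          rw [aPhiRing_eq_pushf] at hr'
          obtain ⟨p, hp, hpr⟩ := pushf_support hr'
          subst hpr
          have hev : aPhiRing gd.ι gd.φ e F ((gd.ι p.1, gd.ι p.2) : Ob' × Ob')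
              = gd.φ e (F p) := hψ_apply e he F p
          rw [hev]
          obtain ⟨q1, q2⟩ := q
          by_cases hc : q2 = gd.ι p.1
          · subst hc
            rw [elemMul_eq]
            have hub : U ((q1, gd.ι p.1) : Ob' × Ob') ∈ gd.b.I e q1 (gd.ι p.1) :=
              hU (q1, gd.ι p.1)
            have him : ImageMem C T gd.ι (a.I e) (gd.φ e) (gd.φ e (F p)) :=
              Or.inr ⟨p.1, p.2, F p, hF p, rfl, rfl, HEq.rfl⟩
            have h2 := habsl e he q1 (gd.ι p.1) (gd.ι p.2) (U (q1, gd.ι p.1))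
              (gd.φ e (F p)) hub him
            rcases h2 with h0 | ⟨y, x, f, hf, hy, hx, hheq⟩
            · rw [h0, DFinsupp.single_zero]
              exact himg0
            · refine ⟨DFinsupp.single (⟨y, x⟩ : Ob × Ob) f,
                fun j => single_apply_mem C (a.I e) hf j, ?_⟩
              rw [hψ_single e he]
              exact single_heq T (by rw [hy, hx]) hheq
          · rw [elemMul_ne hc _ _]
            exact himg0
        · -- aMul (ψ F) U ∈ image
          rw [aMul_def T (aPhiRing gd.ι gd.φ e F) U]
          show (∑ r ∈ (aPhiRing gd.ι gd.φ e F).support, ∑ q ∈ U.support,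
            elemMul T r q ((aPhiRing gd.ι gd.φ e F) r) (U q))
              ∈ aPhiRing gd.ι gd.φ e '' aIdealSet C a e
          refine Finset.sum_induction _ _ himgadd himg0 fun r hr => ?_
          have hr' := DFinsupp.mem_support_iff.mp hr
          rw [aPhiRing_eq_pushf] at hr'
          obtain ⟨p, hp, hpr⟩ := pushf_support hr'
          subst hpr
          have hev : aPhiRing gd.ι gd.φ e F ((gd.ι p.1, gd.ι p.2) : Ob' × Ob')
              = gd.φ e (F p) := hψ_apply e he F p
          rw [hev]
          refine Finset.sum_induction _ _ himgadd himg0 fun q _ => ?_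
          obtain ⟨q1, q2⟩ := q
          by_cases hc : gd.ι p.2 = q1
          · subst hc
            rw [elemMul_eq]
            have hub : U ((gd.ι p.2, q2) : Ob' × Ob') ∈ gd.b.I e (gd.ι p.2) q2 :=
              hU (gd.ι p.2, q2)
            have him : ImageMem C T gd.ι (a.I e) (gd.φ e) (gd.φ e (F p)) :=
              Or.inr ⟨p.1, p.2, F p, hF p, rfl, rfl, HEq.rfl⟩
            have h2 := habsr e he (gd.ι p.1) (gd.ι p.2) q2 (gd.φ e (F p))
              (U (gd.ι p.2, q2)) him hub
            rcases h2 with h0 | ⟨y, x, f, hf, hy, hx, hheq⟩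
            · rw [h0, DFinsupp.single_zero]
              exact himg0
            · refine ⟨DFinsupp.single (⟨y, x⟩ : Ob × Ob) f,
                fun j => single_apply_mem C (a.I e) hf j, ?_⟩
              rw [hψ_single e he]
              exact single_heq T (by rw [hy, hx]) hheq
          · rw [elemMul_ne hc _ _]
            exact himg0
  · -- condition (ii)
    intro g
    have hru := 𝒢.r_mem_units g
    have hdu := 𝒢.d_mem_units g
    beta_reduce
    apply Set.Subset.antisymm
    · rintro W ⟨F, hF, rfl⟩
      constructor
      · exact ⟨F, fun p => I_le_rI hpa (hF p), rfl⟩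
      · have hex : ∀ p ∈ F.support,
            ∃ f' : C.Hom (a.act₀ (𝒢.inv g) p.1) (a.act₀ (𝒢.inv g) p.2),
            f' ∈ a.I (𝒢.d g) (a.act₀ (𝒢.inv g) p.1) (a.act₀ (𝒢.inv g) p.2) ∧
            HEq (gd.b.act g (gd.φ (𝒢.d g) f')) (gd.φ (𝒢.r g) (F p)) := by
          intro p hp
          obtain ⟨hp1, hp2⟩ := mem_D₀_of_ne hpa (hF p) (DFinsupp.mem_support_iff.mp hp)
          obtain ⟨-, f', hf', hheq⟩ := (hc3 g p.1 hp1 p.2 hp2 (gd.φ (𝒢.r g) (F p))).mp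
            ⟨F p, hF p, rfl⟩
          exact ⟨f', hf', hheq⟩
        choose f' hf' hheq using hex
        have hmem1 : ∀ p ∈ F.support.attach, ∀ q : Ob × Ob,
            (DFinsupp.single
              (⟨a.act₀ (𝒢.inv g) p.1.1, a.act₀ (𝒢.inv g) p.1.2⟩ : Ob × Ob)
              (f' p.1 p.2) : aHom C) q ∈ a.I (𝒢.d g) q.1 q.2 :=
          fun p _ q => single_apply_mem C _ (hf' p.1 p.2) q
        refine ⟨aPhiRing gd.ι gd.φ (𝒢.d g) (∑ p ∈ F.support.attach,
          DFinsupp.single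
            (⟨a.act₀ (𝒢.inv g) p.1.1, a.act₀ (𝒢.inv g) p.1.2⟩ : Ob × Ob)
            (f' p.1 p.2)), ⟨_, fun j => ?_, rfl⟩, ?_⟩
        · rw [DFinsupp.finset_sum_apply]
          exact Submodule.sum_mem _ fun p hp => hmem1 p hp j
        · rw [hψ_sum (𝒢.d g) hdu _ _ hmem1,
            aAct_sum hpb g _ _ (fun p hp q => gI_d_le_inv hgl
              (hψ_mem (𝒢.d g) hdu _ (fun j => hmem1 p hp j) q)),
            aPhiRing_eq_pushf (e := 𝒢.r g),
            pushf_eq_sum (F := F) (fun q => hφ0 (𝒢.r g) hru q.1 q.2) (Finset.Subset.refl _),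
            ← Finset.sum_attach F.support (fun p => (DFinsupp.single
              ((gd.ι p.1, gd.ι p.2) : Ob' × Ob') (gd.φ (𝒢.r g) (F p)) : aHom T))]
          refine Finset.sum_congr rfl fun p _ => ?_
          rw [hψ_single (𝒢.d g) hdu, aAct_single hpb g]
          obtain ⟨hp1, hp2⟩ := mem_D₀_of_ne hpa (hF p.1) (DFinsupp.mem_support_iff.mp p.2)
          refine single_heq T ?_ (hheq p.1 p.2)
          show (gd.b.act₀ g (gd.ι (a.act₀ (𝒢.inv g) p.1.1)),
              gd.b.act₀ g (gd.ι (a.act₀ (𝒢.inv g) p.1.2))) = (gd.ι p.1.1, gd.ι p.1.2)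
          rw [r1 g p.1.1 hp1, r1 g p.1.2 hp2]
    · rintro W ⟨⟨F₀, hF₀, hW0⟩, _, ⟨F₁, hF₁, rfl⟩, hW1⟩
      subst hW0
      have hψF₁ : ∀ q : Ob' × Ob',
          aPhiRing gd.ι gd.φ (𝒢.d g) F₁ q ∈ gd.b.I (𝒢.inv g) q.1 q.2 :=
        fun q => gI_d_le_inv hgl (hψ_mem (𝒢.d g) hdu F₁ hF₁ q)
      have hex : ∀ p ∈ F₀.support, ∃ f ∈ a.I g p.1 p.2,
          gd.φ (𝒢.r g) f = gd.φ (𝒢.r g) (F₀ p) := by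
        intro p hp
        have hne : F₀ p ≠ 0 := DFinsupp.mem_support_iff.mp hp
        have hkW : aPhiRing gd.ι gd.φ (𝒢.r g) F₀ ((gd.ι p.1, gd.ι p.2) : Ob' × Ob')
            = gd.φ (𝒢.r g) (F₀ p) := hψ_apply (𝒢.r g) hru F₀ p
        have hkne : gd.φ (𝒢.r g) (F₀ p) ≠ 0 := by
          intro h0
          exact hne ((hφ (𝒢.r g) hru).2.2.2.1 p.1 p.2 (F₀ p) 0 (hF₀ p) (zero_mem _)
            (by rw [h0, hφ0 (𝒢.r g) hru]))
        have hmemg : gd.φ (𝒢.r g) (F₀ p) ∈ gd.b.I g (gd.ι p.1) (gd.ι p.2) := by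
          rw [← hkW, ← hW1, aAct_eq_pushf (a := gd.b)]
          refine pushf_apply_mem (gd.b.I g) (fun q _ => ?_)
            ((gd.ι p.1, gd.ι p.2) : Ob' × Ob')
          exact act_mem hpb (hψF₁ q)
        obtain ⟨hbp1, hbp2⟩ := mem_D₀_of_ne hpb hmemg hkne
        have hWne : aAct gd.b g (aPhiRing gd.ι gd.φ (𝒢.d g) F₁)
            ((gd.ι p.1, gd.ι p.2) : Ob' × Ob') ≠ 0 := by
          rw [hW1, hkW]; exact hkne
        rw [aAct_eq_pushf (a := gd.b)] at hWne
        obtain ⟨r, hr, hrq⟩ := pushf_support hWne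
        have hrne := DFinsupp.mem_support_iff.mp hr
        rw [aPhiRing_eq_pushf (e := 𝒢.d g)] at hrne
        obtain ⟨q, hq, hqr⟩ := pushf_support hrne
        subst hqr
        obtain ⟨hq1, hq2⟩ := mem_D₀_of_ne hpa (hF₁ q) (DFinsupp.mem_support_iff.mp hq)
        have hbq1 : gd.ι q.1 ∈ gd.b.D₀ (𝒢.d g) := (hunitobj (𝒢.d g) hdu q.1).mp hq1
        have hbq2 : gd.ι q.2 ∈ gd.b.D₀ (𝒢.d g) := (hunitobj (𝒢.d g) hdu q.2).mp hq2
        have hbi1 : gd.ι q.1 ∈ gd.b.D₀ (𝒢.inv g) := gD_d_le hgl hbq1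
        have hbi2 : gd.ι q.2 ∈ gd.b.D₀ (𝒢.inv g) := gD_d_le hgl hbq2
        have he1 : gd.b.act₀ g (gd.ι q.1) = gd.ι p.1 := congrArg Prod.fst hrq
        have he2 : gd.b.act₀ g (gd.ι q.2) = gd.ι p.2 := congrArg Prod.snd hrq
        have hp1 : p.1 ∈ a.D₀ g :=
          (hobjiff g p.1).mpr ⟨hpb.1.2.1 g hbp1, q.1, hbq1, he1⟩
        have hp2 : p.2 ∈ a.D₀ g :=
          (hobjiff g p.2).mpr ⟨hpb.1.2.1 g hbp2, q.2, hbq2, he2⟩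
        have hp1' : p.1 ∈ a.D₀ (𝒢.inv (𝒢.inv g)) := by rw [𝒢.inv_inv']; exact hp1
        have hp2' : p.2 ∈ a.D₀ (𝒢.inv (𝒢.inv g)) := by rw [𝒢.inv_inv']; exact hp2
        have hi1 : gd.ι (a.act₀ (𝒢.inv g) p.1) = gd.b.act₀ (𝒢.inv g) (gd.ι p.1) :=
          hiact (𝒢.inv g) p.1 hp1'
        have hi2 : gd.ι (a.act₀ (𝒢.inv g) p.2) = gd.b.act₀ (𝒢.inv g) (gd.ι p.2) :=
          hiact (𝒢.inv g) p.2 hp2'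
        have hq1' : q.1 = a.act₀ (𝒢.inv g) p.1 := by
          apply hι
          calc gd.ι q.1 = gd.b.act₀ (𝒢.inv g) (gd.b.act₀ g (gd.ι q.1)) :=
                (act₀_inv_act₀ hpb hbi1).symm
            _ = gd.b.act₀ (𝒢.inv g) (gd.ι p.1) := by rw [he1]
            _ = gd.ι (a.act₀ (𝒢.inv g) p.1) := hi1.symm
        have hq2' : q.2 = a.act₀ (𝒢.inv g) p.2 := by
          apply hι
          calc gd.ι q.2 = gd.b.act₀ (𝒢.inv g) (gd.b.act₀ g (gd.ι q.2)) :=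
                (act₀_inv_act₀ hpb hbi2).symm
            _ = gd.b.act₀ (𝒢.inv g) (gd.ι p.2) := by rw [he2]
            _ = gd.ι (a.act₀ (𝒢.inv g) p.2) := hi2.symm
        have hev1 : aPhiRing gd.ι gd.φ (𝒢.d g) F₁ ((gd.ι q.1, gd.ι q.2) : Ob' × Ob')
            = gd.φ (𝒢.d g) (F₁ q) := hψ_apply (𝒢.d g) hdu F₁ q
        have hev2 := aAct_apply hpb g hψF₁ (p := ((gd.ι q.1, gd.ι q.2) : Ob' × Ob'))
          hbi1 hbi2
        rw [hev1] at hev2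
        have hfin : aAct gd.b g (aPhiRing gd.ι gd.φ (𝒢.d g) F₁)
            ((gd.ι p.1, gd.ι p.2) : Ob' × Ob') = gd.φ (𝒢.r g) (F₀ p) := by
          rw [hW1]; exact hkW
        have hheqk : HEq (gd.b.act g (gd.φ (𝒢.d g) (F₁ q))) (gd.φ (𝒢.r g) (F₀ p)) := by
          refine HEq.trans (heq_of_eq hev2.symm) ?_
          refine HEq.trans (apply_heq T _ hrq) (heq_of_eq hfin)
        obtain ⟨qq1, qq2⟩ := q
        simp only at hq1' hq2'
        subst hq1'
        subst hq2'
        exact (hc3 g p.1 hp1 p.2 hp2 (gd.φ (𝒢.r g) (F₀ p))).mpr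
          ⟨⟨F₀ p, hF₀ p, rfl⟩,
            F₁ (a.act₀ (𝒢.inv g) p.1, a.act₀ (𝒢.inv g) p.2),
            hF₁ (a.act₀ (𝒢.inv g) p.1, a.act₀ (𝒢.inv g) p.2), hheqk⟩
      choose fp hfp hfpk using hex
      refine ⟨∑ p ∈ F₀.support.attach, DFinsupp.single p.1 (fp p.1 p.2),
        fun j => ?_, ?_⟩
      · rw [DFinsupp.finset_sum_apply]
        exact Submodule.sum_mem _ fun p _ => single_apply_mem C (a.I g) (hfp p.1 p.2) j
      · rw [hψ_sum (𝒢.r g) hru _ _ (fun p _ j =>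
            single_apply_mem C (a.I (𝒢.r g)) (I_le_rI hpa (hfp p.1 p.2)) j),
          aPhiRing_eq_pushf (e := 𝒢.r g),
          pushf_eq_sum (F := F₀) (fun q => hφ0 (𝒢.r g) hru q.1 q.2) (Finset.Subset.refl _),
          ← Finset.sum_attach F₀.support (fun p => (DFinsupp.single
            ((gd.ι p.1, gd.ι p.2) : Ob' × Ob') (gd.φ (𝒢.r g) (F₀ p)) : aHom T))]
        refine Finset.sum_congr rfl fun p _ => ?_
        rw [← aPhiRing_eq_pushf, hψ_single (𝒢.r g) hru, hfpk p.1 p.2]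
  · -- condition (iii)
    intro g X hX
    beta_reduce at hX ⊢
    have hXd : ∀ p : Ob × Ob, X p ∈ a.I (𝒢.d g) p.1 p.2 := fun p => I_inv_le_dI hpa (hX p)
    have hdu := 𝒢.d_mem_units g
    have hru := 𝒢.r_mem_units g
    rw [aPhiRing_eq_pushf (e := 𝒢.d g), aAct_eq_pushf (a := gd.b) (g := g),
      pushf_pushf (τ := fun p : Ob × Ob => ((gd.ι p.1, gd.ι p.2) : Ob' × Ob'))
        (Φ := fun p v => gd.φ (𝒢.d g) v)
        (τ' := fun p : Ob' × Ob' => ((gd.b.act₀ g p.1, gd.b.act₀ g p.2) : Ob' × Ob'))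
        (Φ' := fun p v => gd.b.act g v) (S' := gd.b.I (𝒢.inv g))
        (fun p => hφ0 (𝒢.d g) hdu p.1 p.2) (fun p => hb0 g p) (hbadd g)
        (fun p => gI_d_le_inv hgl (hφmem (𝒢.d g) hdu p.1 p.2 (X p) (hXd p))),
      aPhiRing_eq_pushf (e := 𝒢.r g), aAct_eq_pushf (a := a) (g := g),
      pushf_pushf (τ := fun p : Ob × Ob => ((a.act₀ g p.1, a.act₀ g p.2) : Ob × Ob))
        (Φ := fun p v => a.act g v)
        (τ' := fun p : Ob × Ob => ((gd.ι p.1, gd.ι p.2) : Ob' × Ob'))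
        (Φ' := fun p v => gd.φ (𝒢.r g) v) (S' := a.I (𝒢.r g))
        (fun p => act_zero hpa g p.1 p.2) (fun p => hφ0 (𝒢.r g) hru p.1 p.2)
        (fun p v w hv hw => hφadd (𝒢.r g) hru p.1 p.2 v w hv hw)
        (fun p => I_le_rI hpa (act_mem hpa (hX p)))]
    refine Finset.sum_congr rfl fun p hp => ?_
    obtain ⟨h1, h2⟩ := mem_D₀_of_ne hpa (hX p) (DFinsupp.mem_support_iff.mp hp)
    obtain ⟨p1, p2⟩ := p
    refine single_heq T ?_ ?_
    · show (gd.b.act₀ g (gd.ι p1), gd.b.act₀ g (gd.ι p2))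
        = (gd.ι (a.act₀ g p1), gd.ι (a.act₀ g p2))
      rw [hiact g p1 h1, hiact g p2 h2]
    · exact hc4 g p1 p2 (X (p1, p2)) (hX (p1, p2))
  · -- condition (iv)
    intro g k
    beta_reduce
    constructor
    · -- DN g → closure
      intro hk
      have hkk : k = ∑ p ∈ k.support, DFinsupp.single p (k p) := (sum_support_single k).symm
      rw [hkk]
      refine AddSubgroup.sum_mem _ fun p hp => ?_
      obtain ⟨hp1, hp2⟩ := mem_D₀_of_ne hpb (hk p) (DFinsupp.mem_support_iff.mp hp)
      have hkp : k p ∈ Submodule.span R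
          {m : T.Hom p.1 p.2 | ∃ h : G, 𝒢.r h = 𝒢.r g ∧
            ∃ (y' x' : Ob) (f : C.Hom y' x'), f ∈ a.I (𝒢.d h) y' x' ∧
              gd.ι y' = gd.b.act₀ (𝒢.inv h) p.1 ∧ gd.ι x' = gd.b.act₀ (𝒢.inv h) p.2 ∧
              HEq (gd.b.act h (gd.φ (𝒢.d h) f)) m} := by
        rw [← hc5 g p.1 p.2]
        exact hk p
      -- the per-component generator set
      set Sp := {m : T.Hom p.1 p.2 | ∃ h : G, 𝒢.r h = 𝒢.r g ∧
          ∃ (y' x' : Ob) (f : C.Hom y' x'), f ∈ a.I (𝒢.d h) y' x' ∧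
            gd.ι y' = gd.b.act₀ (𝒢.inv h) p.1 ∧ gd.ι x' = gd.b.act₀ (𝒢.inv h) p.2 ∧
            HEq (gd.b.act h (gd.φ (𝒢.d h) f)) m} with hSp
      -- object roundtrip facts for members of Sp
      have hobjfix : ∀ (h : G), 𝒢.r h = 𝒢.r g → ∀ (y' : Ob) (i : Ob'),
          i ∈ gd.b.D₀ g → gd.ι y' = gd.b.act₀ (𝒢.inv h) i →
          gd.b.act₀ h (gd.ι y') = i := by
        intro h hrh y' i hi hy
        rw [hy]
        exact act₀_act₀_inv hpb (gD_congr hgl hpb hrh.symm hi)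
      -- Sp is closed under scalar multiplication
      have hsmulSp : ∀ (c : R), ∀ m ∈ Sp, c • m ∈ Sp := by
        rintro c m ⟨h, hrh, y', x', f, hf, hy, hx, hheq⟩
        have hdu := 𝒢.d_mem_units h
        refine ⟨h, hrh, y', x', c • f, Submodule.smul_mem _ c hf, hy, hx, ?_⟩
        have e1 : gd.b.act₀ h (gd.ι y') = p.1 := hobjfix h hrh y' p.1 hp1 hy
        have e2 : gd.b.act₀ h (gd.ι x') = p.2 := hobjfix h hrh x' p.2 hp2 hx
        have hφf : gd.φ (𝒢.d h) f ∈ gd.b.I (𝒢.inv h) (gd.ι y') (gd.ι x') :=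
          gI_d_le_inv hgl (hφmem (𝒢.d h) hdu y' x' f hf)
        have hc : gd.b.act h (gd.φ (𝒢.d h) (c • f)) = c • gd.b.act h (gd.φ (𝒢.d h) f) := by
          rw [(hφ (𝒢.d h) hdu).2.1 y' x' c f hf]
          exact hpb.2.2.2.2.2.2.1 h (gd.ι y') (gd.ι x') c (gd.φ (𝒢.d h) f) hφf
        rw [hc]
        exact smul_heq T e1 e2 c hheq
      -- span ≤ closure
      have h2 : k p ∈ AddSubgroup.closure Sp := by
        refine Submodule.span_induction (p := fun m _ => m ∈ AddSubgroup.closure Sp)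
          (fun m hm => AddSubgroup.subset_closure hm) (AddSubgroup.zero_mem _)
          (fun m m' _ _ hm hm' => AddSubgroup.add_mem _ hm hm') (fun c m _ hm => ?_) hkp
        refine AddSubgroup.closure_induction
          (p := fun m _ => c • m ∈ AddSubgroup.closure Sp)
          (fun m hm => AddSubgroup.subset_closure (hsmulSp c m hm))
          (by beta_reduce; rw [smul_zero]; exact AddSubgroup.zero_mem _)
          (fun x y _ _ hx hy => by
            beta_reduce at hx hy ⊢
            rw [smul_add]
            exact AddSubgroup.add_mem _ hx hy)
          (fun x _ hx => by
            beta_reduce at hx ⊢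
            rw [smul_neg]
            exact AddSubgroup.neg_mem _ hx) hm
      -- push into the closure of the global generating set
      refine AddSubgroup.closure_induction
        (p := fun m _ => DFinsupp.single p m ∈ AddSubgroup.closure
          {m : aHom T | ∃ h : G, 𝒢.r h = 𝒢.r g ∧ ∃ F ∈ aIdealSet C a (𝒢.d h),
            m = aAct gd.b h (aPhiRing gd.ι gd.φ (𝒢.d h) F)})
        ?_ (by beta_reduce; rw [DFinsupp.single_zero]; exact AddSubgroup.zero_mem _)
        (fun x y _ _ hx hy => by
          beta_reduce at hx hy ⊢
          rw [DFinsupp.single_add]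
          exact AddSubgroup.add_mem _ hx hy)
        (fun x _ hx => by
          beta_reduce at hx ⊢
          rw [DFinsupp.single_neg]
          exact AddSubgroup.neg_mem _ hx) h2
      rintro m ⟨h, hrh, y', x', f, hf, hy, hx, hheq⟩
      refine AddSubgroup.subset_closure ?_
      have hdu := 𝒢.d_mem_units h
      refine ⟨h, hrh, DFinsupp.single (⟨y', x'⟩ : Ob × Ob) f,
        fun j => single_apply_mem C (a.I (𝒢.d h)) hf j, ?_⟩
      rw [hψ_single (𝒢.d h) hdu, aAct_single hpb h]
      refine (single_heq T ?_ hheq).symm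
      show ((gd.b.act₀ h (gd.ι y'), gd.b.act₀ h (gd.ι x')) : Ob' × Ob') = p
      have e1 : gd.b.act₀ h (gd.ι y') = p.1 := hobjfix h hrh y' p.1 hp1 hy
      have e2 : gd.b.act₀ h (gd.ι x') = p.2 := hobjfix h hrh x' p.2 hp2 hx
      rw [e1, e2]
    · -- closure → DN g
      intro hk
      refine AddSubgroup.closure_induction
        (p := fun m _ => m ∈ aIdealSet T gd.b g)
        ?_ (hDN0 g) (fun x y _ _ hx hy => hDNadd g x hx y hy)
        (fun x _ hx => hDNneg g x hx) hk
      rintro m ⟨h, hrh, F, hF, rfl⟩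
      intro p
      refine gI_congr hgl hpb hrh ?_
      rw [aAct_eq_pushf (a := gd.b)]
      refine pushf_apply_mem (gd.b.I h) (fun q _ => ?_) p
      exact act_mem hpb (gI_d_le_inv hgl (hψ_mem (𝒢.d h) (𝒢.d_mem_units h) F hF q))
end
end

section
/- Let 𝒢 be a groupoid with 𝒢₀ finite and let B be a 𝒢-graded R-category. Then the R-semicategories B⊗𝒢 and B#𝒢 are R-categories. Explicitly, writing 1_x = Σ_{u∈𝒢₀} 1_x^u for the homogeneous decomposition of the identity of x ∈ B₀, the component 1_x^e is the identity morphism of the object (x,e) of B⊗𝒢, and the component 1_x^{d(s)} is the identity morphism of the object (x,s) of B#𝒢. -/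
open scoped Classical

noncomputable section

universe u u₂ v v' w w'

variable {R : Type u} [CommRing R] {G : Type u₂} {Ob : Type v}

namespace Stmt17Aux

open AlgGroupoid
variable {G : Type u₂} (𝒢 : AlgGroupoid G)

theorem inv_d (g : G) : 𝒢.inv (𝒢.d g) = 𝒢.d g := by
  simp only [AlgGroupoid.d]
  rw [𝒢.inv_mul' _ _ (𝒢.comp_inv_left g), 𝒢.inv_inv']

theorem comp_d_inv (g : G) : 𝒢.comp (𝒢.d g) (𝒢.inv g) := by
  simpa only [AlgGroupoid.d] using
    𝒢.comp_mul_left (𝒢.inv g) g (𝒢.inv g) (𝒢.comp_inv_left g) (𝒢.comp_inv_right g)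

theorem d_mul_inv (g : G) : 𝒢.mul (𝒢.d g) (𝒢.inv g) = 𝒢.inv g := by
  simpa only [AlgGroupoid.d] using 𝒢.mul_inv_cancel' (𝒢.inv g) g (𝒢.comp_inv_left g)

theorem d_mul_d (g : G) : 𝒢.mul (𝒢.d g) (𝒢.d g) = 𝒢.d g := by
  have h := 𝒢.mul_assoc' (𝒢.d g) (𝒢.inv g) g (comp_d_inv 𝒢 g) (𝒢.comp_inv_left g)
  rw [d_mul_inv 𝒢 g] at h
  simp only [AlgGroupoid.d] at h ⊢
  exact h.symm

theorem comp_g_d (g : G) : 𝒢.comp g (𝒢.d g) := by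
  rw [𝒢.comp_iff, inv_d 𝒢 g, d_mul_d 𝒢 g]
  rfl

theorem mul_d_self (g : G) : 𝒢.mul g (𝒢.d g) = g := by
  have h := 𝒢.inv_mul_cancel' (𝒢.inv g) g (𝒢.comp_inv_left g)
  rw [𝒢.inv_inv'] at h
  simpa only [AlgGroupoid.d] using h

theorem r_eq_d_inv (g : G) : 𝒢.r g = 𝒢.d (𝒢.inv g) := by
  simp only [AlgGroupoid.d, AlgGroupoid.r, 𝒢.inv_inv']

theorem comp_r_g (g : G) : 𝒢.comp (𝒢.r g) g := by
  rw [𝒢.comp_iff, r_eq_d_inv, inv_d, d_mul_d]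
  simp only [AlgGroupoid.d, AlgGroupoid.r, 𝒢.inv_inv']

theorem r_mul_self (g : G) : 𝒢.mul (𝒢.r g) g = g := by
  have h := 𝒢.mul_assoc' g (𝒢.inv g) g (𝒢.comp_inv_right g) (𝒢.comp_inv_left g)
  simp only [AlgGroupoid.r]
  rw [h]
  exact mul_d_self 𝒢 g

theorem eq_d_of_mul_eq {g u : G} (hc : 𝒢.comp g u) (h : 𝒢.mul g u = g) : u = 𝒢.d g := by
  have := 𝒢.inv_mul_cancel' g u hc
  rw [h] at this
  simp only [AlgGroupoid.d]
  exact this.symm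

theorem eq_r_of_mul_eq {g u : G} (hc : 𝒢.comp u g) (h : 𝒢.mul u g = g) : u = 𝒢.r g := by
  have := 𝒢.mul_inv_cancel' u g hc
  rw [h] at this
  simp only [AlgGroupoid.r]
  exact this.symm

theorem comp_inv_st {s t : G} (h : 𝒢.r t = 𝒢.r s) : 𝒢.comp (𝒢.inv s) t := by
  rw [𝒢.comp_iff, 𝒢.inv_inv']
  simp only [AlgGroupoid.r] at h
  exact h.symm

theorem smash_key {s t : G} (h : 𝒢.r t = 𝒢.r s) :
    𝒢.mul (𝒢.mul (𝒢.inv s) t) (𝒢.mul (𝒢.inv t) s) = 𝒢.d s := by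
  have c1 : 𝒢.comp (𝒢.inv s) t := comp_inv_st 𝒢 h
  have c2 : 𝒢.comp (𝒢.inv t) s := comp_inv_st 𝒢 h.symm
  have c3 : 𝒢.comp t (𝒢.mul (𝒢.inv t) s) :=
    𝒢.comp_mul_right t (𝒢.inv t) s (𝒢.comp_inv_right t) c2
  have a1 := 𝒢.mul_assoc' (𝒢.inv s) t (𝒢.mul (𝒢.inv t) s) c1 c3
  have a2 := 𝒢.mul_assoc' t (𝒢.inv t) s (𝒢.comp_inv_right t) c2
  have h' : 𝒢.mul t (𝒢.inv t) = 𝒢.mul s (𝒢.inv s) := h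
  have hs : 𝒢.mul t (𝒢.mul (𝒢.inv t) s) = s := by
    rw [← a2, h']
    exact r_mul_self 𝒢 s
  rw [a1, hs]
  rfl

theorem d_inv_mul {s t : G} (h : 𝒢.r t = 𝒢.r s) :
    𝒢.d (𝒢.mul (𝒢.inv t) s) = 𝒢.d s := by
  have c2 : 𝒢.comp (𝒢.inv t) s := comp_inv_st 𝒢 h.symm
  have hi : 𝒢.inv (𝒢.mul (𝒢.inv t) s) = 𝒢.mul (𝒢.inv s) t := by
    rw [𝒢.inv_mul' _ _ c2, 𝒢.inv_inv']
  show 𝒢.mul (𝒢.inv (𝒢.mul (𝒢.inv t) s)) (𝒢.mul (𝒢.inv t) s) = 𝒢.d s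
  rw [hi]
  exact smash_key 𝒢 h

theorem r_inv_mul {s t : G} (h : 𝒢.r t = 𝒢.r s) :
    𝒢.r (𝒢.mul (𝒢.inv s) t) = 𝒢.d s := by
  have c1 : 𝒢.comp (𝒢.inv s) t := comp_inv_st 𝒢 h
  have hi : 𝒢.inv (𝒢.mul (𝒢.inv s) t) = 𝒢.mul (𝒢.inv t) s := by
    rw [𝒢.inv_mul' _ _ c1, 𝒢.inv_inv']
  show 𝒢.mul (𝒢.mul (𝒢.inv s) t) (𝒢.inv (𝒢.mul (𝒢.inv s) t)) = 𝒢.d s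
  rw [hi]
  exact smash_key 𝒢 h





theorem coe_of_apply {R : Type u} [CommRing R] {M : Type w} [AddCommGroup M] [Module R M]
    {ι : Type u₂} [DecidableEq ι] (p : ι → Submodule R M) (k g : ι) (m : M) (hm : m ∈ p k) :
    ((DirectSum.of (fun i => ↥(p i)) k ⟨m, hm⟩ g : ↥(p g)) : M) = if k = g then m else 0 := by
  by_cases hkg : k = g
  · subst hkg
    rw [DirectSum.of_eq_same, if_pos rfl]
  · rw [DirectSum.of_eq_of_ne _ _ _ (Ne.symm hkg), if_neg hkg]
    rfl

variable {R : Type u} [CommRing R] {G : Type u₂} {Ob : Type v}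

theorem key_right (𝒢 : AlgGroupoid G) (B : RSemicat.{u, v, w} R Ob)
    (deco : ∀ y x : Ob, G → Submodule R (B.Hom y x))
    (hgr : IsGrading 𝒢 B deco) (ident : ∀ x : Ob, B.Hom x x)
    (hident : ∀ x : Ob,
      (∀ (y : Ob) (f : B.Hom x y), B.comp (ident x) f = f) ∧
      (∀ (y : Ob) (f : B.Hom y x), B.comp f (ident x) = f))
    (x : Ob) (c : G →₀ B.Hom x x) (hc : ∀ g : G, c g ∈ deco x x g)
    (hsum : (c.sum fun _ v => v) = ident x)
    {y : Ob} {g : G} (h : B.Hom y x) (hh : h ∈ deco y x g) :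
    B.comp h (c (𝒢.d g)) = h := by
  classical
  have hinj := (hgr.1 y x).injective
  have pf : ∀ u : G, B.comp h (c u) ∈ deco y x (𝒢.mul g u) := by
    intro u
    by_cases hcu : 𝒢.comp g u
    · exact hgr.2.1 y x x g u hcu h hh (c u) (hc u)
    · rw [hgr.2.2 y x x g u hcu h hh (c u) (hc u)]
      exact zero_mem _
  have hz : ∀ u : G, ¬ 𝒢.comp g u → B.comp h (c u) = 0 := fun u hcu =>
    hgr.2.2 y x x g u hcu h hh (c u) (hc u)
  have hS : (DirectSum.of (fun k => ↥(deco y x k)) g ⟨h, hh⟩) =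
      ∑ u ∈ c.support, DirectSum.of (fun k => ↥(deco y x k)) (𝒢.mul g u)
        ⟨B.comp h (c u), pf u⟩ := by
    apply hinj
    rw [map_sum]
    simp only [DirectSum.coeAddMonoidHom_of]
    have hms := map_sum (AddMonoidHom.mk' (fun v => B.comp h v)
      (fun a b => B.comp_add_right h a b)) (fun u => c u) c.support
    simp only [AddMonoidHom.mk'_apply] at hms
    rw [← hms]
    have : (∑ u ∈ c.support, c u) = ident x := hsum
    rw [this, (hident x).2 y h]
  have hg := congrArg (fun F : DirectSum G (fun k => ↥(deco y x k)) => ((F g : ↥(deco y x g)) : B.Hom y x)) hS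
  simp only at hg
  rw [DirectSum.of_eq_same] at hg
  rw [DFinsupp.finset_sum_apply, AddSubmonoidClass.coe_finset_sum] at hg
  have hterm : ∀ u ∈ c.support,
      ((DirectSum.of (fun k => ↥(deco y x k)) (𝒢.mul g u) ⟨B.comp h (c u), pf u⟩ g :
        ↥(deco y x g)) : B.Hom y x) = if u = 𝒢.d g then B.comp h (c u) else 0 := by
    intro u _
    rw [coe_of_apply]
    by_cases hud : u = 𝒢.d g
    · subst hud
      rw [if_pos (mul_d_self 𝒢 g), if_pos rfl]
    · rw [if_neg hud]
      by_cases hmg : 𝒢.mul g u = g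
      · rw [if_pos hmg]
        by_cases hcu : 𝒢.comp g u
        · exact absurd (eq_d_of_mul_eq 𝒢 hcu hmg) hud
        · exact hz u hcu
      · rw [if_neg hmg]
  rw [Finset.sum_congr rfl hterm, Finset.sum_ite_eq' c.support (𝒢.d g)
    (fun u => B.comp h (c u))] at hg
  by_cases hmem : 𝒢.d g ∈ c.support
  · rw [if_pos hmem] at hg
    exact hg.symm
  · rw [if_neg hmem] at hg
    rw [Finsupp.notMem_support_iff.mp hmem, B.comp_zero_right]
    exact hg.symm

theorem key_left (𝒢 : AlgGroupoid G) (B : RSemicat.{u, v, w} R Ob)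
    (deco : ∀ y x : Ob, G → Submodule R (B.Hom y x))
    (hgr : IsGrading 𝒢 B deco) (ident : ∀ x : Ob, B.Hom x x)
    (hident : ∀ x : Ob,
      (∀ (y : Ob) (f : B.Hom x y), B.comp (ident x) f = f) ∧
      (∀ (y : Ob) (f : B.Hom y x), B.comp f (ident x) = f))
    (x : Ob) (c : G →₀ B.Hom x x) (hc : ∀ g : G, c g ∈ deco x x g)
    (hsum : (c.sum fun _ v => v) = ident x)
    {y : Ob} {g : G} (h : B.Hom x y) (hh : h ∈ deco x y g) :
    B.comp (c (𝒢.r g)) h = h := by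
  classical
  have hinj := (hgr.1 x y).injective
  have pf : ∀ u : G, B.comp (c u) h ∈ deco x y (𝒢.mul u g) := by
    intro u
    by_cases hcu : 𝒢.comp u g
    · exact hgr.2.1 x x y u g hcu (c u) (hc u) h hh
    · rw [hgr.2.2 x x y u g hcu (c u) (hc u) h hh]
      exact zero_mem _
  have hz : ∀ u : G, ¬ 𝒢.comp u g → B.comp (c u) h = 0 := fun u hcu =>
    hgr.2.2 x x y u g hcu (c u) (hc u) h hh
  have hS : (DirectSum.of (fun k => ↥(deco x y k)) g ⟨h, hh⟩) =
      ∑ u ∈ c.support, DirectSum.of (fun k => ↥(deco x y k)) (𝒢.mul u g)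
        ⟨B.comp (c u) h, pf u⟩ := by
    apply hinj
    rw [map_sum]
    simp only [DirectSum.coeAddMonoidHom_of]
    have hms := map_sum (AddMonoidHom.mk' (fun v => B.comp v h)
      (fun a b => B.comp_add_left a b h)) (fun u => c u) c.support
    simp only [AddMonoidHom.mk'_apply] at hms
    rw [← hms]
    have : (∑ u ∈ c.support, c u) = ident x := hsum
    rw [this, (hident x).1 y h]
  have hg := congrArg (fun F : DirectSum G (fun k => ↥(deco x y k)) => ((F g : ↥(deco x y g)) : B.Hom x y)) hS
  simp only at hg
  rw [DirectSum.of_eq_same] at hg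
  rw [DFinsupp.finset_sum_apply, AddSubmonoidClass.coe_finset_sum] at hg
  have hterm : ∀ u ∈ c.support,
      ((DirectSum.of (fun k => ↥(deco x y k)) (𝒢.mul u g) ⟨B.comp (c u) h, pf u⟩ g :
        ↥(deco x y g)) : B.Hom x y) = if u = 𝒢.r g then B.comp (c u) h else 0 := by
    intro u _
    rw [coe_of_apply]
    by_cases hud : u = 𝒢.r g
    · subst hud
      rw [if_pos (r_mul_self 𝒢 g), if_pos rfl]
    · rw [if_neg hud]
      by_cases hmg : 𝒢.mul u g = g
      · rw [if_pos hmg]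
        by_cases hcu : 𝒢.comp u g
        · exact absurd (eq_r_of_mul_eq 𝒢 hcu hmg) hud
        · exact hz u hcu
      · rw [if_neg hmg]
  rw [Finset.sum_congr rfl hterm, Finset.sum_ite_eq' c.support (𝒢.r g)
    (fun u => B.comp (c u) h)] at hg
  by_cases hmem : 𝒢.r g ∈ c.support
  · rw [if_pos hmem] at hg
    exact hg.symm
  · rw [if_neg hmem] at hg
    rw [Finsupp.notMem_support_iff.mp hmem, B.comp_zero_left]
    exact hg.symm



end Stmt17Aux

/-- Let `𝒢` be a groupoid with `𝒢₀` finite and `B` a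
`𝒢`-graded `R`-category. Then `B ⊗ 𝒢` and `B # 𝒢` are `R`-categories:
writing `1_x = Σ_{u ∈ 𝒢₀} 1_x^u` for the homogeneous decomposition of the
identity of `x`, the component `1_x^e` is the identity morphism of the
object `(x, e)` of `B ⊗ 𝒢`, and `1_x^{d s}` is the identity morphism of the
object `(x, s)` of `B # 𝒢`. -/
theorem stmt17 {R : Type u} [CommRing R] {G : Type u₂} {Ob : Type v}
    (𝒢 : AlgGroupoid G) (hfin : (𝒢.units).Finite)
    (B : RSemicat.{u, v, w} R Ob)
    (deco : ∀ y x : Ob, G → Submodule R (B.Hom y x))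
    (hgr : IsGrading 𝒢 B deco)
    (ident : ∀ x : Ob, B.Hom x x)
    (hident : ∀ x : Ob,
      (∀ (y : Ob) (f : B.Hom x y), B.comp (ident x) f = f) ∧
      (∀ (y : Ob) (f : B.Hom y x), B.comp f (ident x) = f)) :
    ∀ (x : Ob) (c : G →₀ B.Hom x x),
      (∀ g : G, c g ∈ deco x x g) → (c.sum fun _ v => v) = ident x →
      -- `1_x^e` is the identity morphism of the object `(x, e)` of `B ⊗ 𝒢`
      ((∀ e ∈ 𝒢.units, ∀ (y : Ob), ∀ f ∈ 𝒢.units,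
        (∀ h : B.Hom y x, h ∈ (⨆ g ∈ {g : G | 𝒢.d g = e ∧ 𝒢.r g = f}, deco y x g) →
          B.comp h (c e) = h) ∧
        (∀ h : B.Hom x y, h ∈ (⨆ g ∈ {g : G | 𝒢.d g = f ∧ 𝒢.r g = e}, deco x y g) →
          B.comp (c e) h = h)) ∧
      -- `1_x^{d s}` is the identity morphism of the object `(x, s)` of `B # 𝒢`
      (∀ (s : G) (y : Ob) (t : G), 𝒢.r t = 𝒢.r s →
        (∀ h ∈ deco y x (𝒢.mul (𝒢.inv t) s), B.comp h (c (𝒢.d s)) = h) ∧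
        (∀ h ∈ deco x y (𝒢.mul (𝒢.inv s) t), B.comp (c (𝒢.d s)) h = h))) := by
  intro x c hc hsum
  constructor
  · intro e _ y f _
    constructor
    · intro h hh
      refine Submodule.iSup_induction
        (motive := fun m : B.Hom y x => B.comp m (c e) = m)
        (fun g => ⨆ _ : g ∈ {g : G | 𝒢.d g = e ∧ 𝒢.r g = f}, deco y x g) hh ?_ ?_ ?_
      · intro g m hm
        by_cases hg : g ∈ {g : G | 𝒢.d g = e ∧ 𝒢.r g = f}
        · rw [iSup_pos hg] at hm
          have := Stmt17Aux.key_right 𝒢 B deco hgr ident hident x c hc hsum m hm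
          rwa [hg.1] at this
        · rw [iSup_neg hg] at hm
          rw [Submodule.mem_bot] at hm
          rw [hm, B.comp_zero_left]
      · exact B.comp_zero_left (c e)
      · intro m m' hm hm'
        rw [B.comp_add_left, hm, hm']
    · intro h hh
      refine Submodule.iSup_induction
        (motive := fun m : B.Hom x y => B.comp (c e) m = m)
        (fun g => ⨆ _ : g ∈ {g : G | 𝒢.d g = f ∧ 𝒢.r g = e}, deco x y g) hh ?_ ?_ ?_
      · intro g m hm
        by_cases hg : g ∈ {g : G | 𝒢.d g = f ∧ 𝒢.r g = e}
        · rw [iSup_pos hg] at hm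
          have := Stmt17Aux.key_left 𝒢 B deco hgr ident hident x c hc hsum m hm
          rwa [hg.2] at this
        · rw [iSup_neg hg] at hm
          rw [Submodule.mem_bot] at hm
          rw [hm, B.comp_zero_right]
      · exact B.comp_zero_right (c e)
      · intro m m' hm hm'
        rw [B.comp_add_right, hm, hm']
  · intro s y t hrt
    constructor
    · intro h hh
      have := Stmt17Aux.key_right 𝒢 B deco hgr ident hident x c hc hsum h hh
      rwa [Stmt17Aux.d_inv_mul 𝒢 hrt] at this
    · intro h hh
      have := Stmt17Aux.key_left 𝒢 B deco hgr ident hident x c hc hsum h hh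
      rwa [Stmt17Aux.r_inv_mul 𝒢 hrt] at this
end
end
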